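/- arXiv:1907.06468 — 10 statements merged into one kernel-verified Lean document; each statement's English description precedes it below -/
import Mathlib

section
/- Let $I$ be a monomial ideal in $R = k[x_1,\dots,x_n]$ and let $I^{(t)}$ denote its $t$-th symbolic power. Then $I^{(t)}$ is integrally closed if and only if $I_F^t$ is integrally closed for every minimal prime $P_F$ of $I$, where $I_F$ denotes the $P_F$-primary component of $I$. -/
open MvPolynomial

/-- A monomial ideal: an ideal generated by a set of monomials. -/
def IsMonomialIdeal {k : Type*} [Field k] {n : ℕ}
    (I : Ideal (MvPolynomial (Fin n) k)) : Prop :=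
  ∃ S : Set (Fin n →₀ ℕ), I = Ideal.span ((fun a => (monomial a (1 : k))) '' S)

/-- The contraction of `J R_P` back to `R`, i.e. the `P`-primary component of `J`
when `P` is a minimal prime of `J`. -/
noncomputable def satAt {R : Type*} [CommRing R] (J P : Ideal R) [P.IsPrime] : Ideal R :=
  Ideal.comap (algebraMap R (Localization.AtPrime P))
    (Ideal.map (algebraMap R (Localization.AtPrime P)) J)

/-- The `t`-th symbolic power of `I`: the intersection of the primary components
of `I^t` associated with the minimal primes of `I`. -/
noncomputable def symbolicPower {R : Type*} [CommRing R] (I : Ideal R) (t : ℕ) : Ideal R :=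
  ⨅ (P : Ideal R) (hP : P ∈ I.minimalPrimes), @satAt R _ (I ^ t) P hP.1.1

/-- An ideal is integrally closed if it contains every element which is integral
over it, i.e. every `x` satisfying an equation
`x^n + a₁ x^{n-1} + ⋯ + aₙ = 0` with `aᵢ ∈ I^i`. -/
def IsIntegrallyClosedIdeal {R : Type*} [CommRing R] (I : Ideal R) : Prop :=
  ∀ x : R, (∃ n : ℕ, 0 < n ∧ ∃ a : ℕ → R,
      (∀ i, 1 ≤ i → i ≤ n → a i ∈ I ^ i) ∧
      x ^ n + ∑ i ∈ Finset.range n, a (n - i) * x ^ i = 0) → x ∈ I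

namespace Stmt3Aux

open scoped Classical Pointwise
set_option maxHeartbeats 4000000

variable {k : Type*} [Field k] {n : ℕ}

/-- prime of variables -/
noncomputable def Pvar (k : Type*) [Field k] {n : ℕ} (F : Set (Fin n)) :
    Ideal (MvPolynomial (Fin n) k) :=
  Ideal.span (X '' F)

lemma mem_Pvar {F : Set (Fin n)} {p : MvPolynomial (Fin n) k} :
    p ∈ Pvar k F ↔ ∀ m ∈ p.support, ∃ i ∈ F, m i ≠ 0 :=
  mem_ideal_span_X_image

lemma X_mem_Pvar {F : Set (Fin n)} {i : Fin n} (hi : i ∈ F) :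
    (X i : MvPolynomial (Fin n) k) ∈ Pvar k F :=
  Ideal.subset_span ⟨i, hi, rfl⟩

/-- the algebra map killing the variables of `F` -/
noncomputable def killF (k : Type*) [Field k] {n : ℕ} (F : Set (Fin n)) :
    MvPolynomial (Fin n) k →ₐ[k] MvPolynomial (Fin n) k :=
  aeval (fun i => if i ∈ F then 0 else X i)

lemma killF_monomial_of_clean {F : Set (Fin n)} {m : Fin n →₀ ℕ} (c : k)
    (h : ∀ i ∈ F, m i = 0) : killF k F (monomial m c) = monomial m c := by
  rw [killF, aeval_monomial, monomial_eq]
  congr 1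
  refine Finset.prod_congr rfl fun i hi => ?_
  have : i ∉ F := fun hiF => (Finsupp.mem_support_iff.mp hi) (h i hiF)
  simp [this]

lemma killF_monomial_of_dirty {F : Set (Fin n)} {m : Fin n →₀ ℕ} (c : k)
    {i : Fin n} (hiF : i ∈ F) (hmi : m i ≠ 0) : killF k F (monomial m c) = 0 := by
  rw [killF, aeval_monomial]
  have : (m.prod fun i e => (if i ∈ F then (0 : MvPolynomial (Fin n) k) else X i) ^ e) = 0 := by
    refine Finset.prod_eq_zero (Finsupp.mem_support_iff.mpr hmi) ?_
    simp [hiF, zero_pow hmi]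
  rw [this, mul_zero]

lemma Pvar_eq_ker (F : Set (Fin n)) :
    Pvar k F = RingHom.ker (killF k F).toRingHom := by
  apply le_antisymm
  · rw [Pvar, Ideal.span_le]
    rintro _ ⟨i, hi, rfl⟩
    simp only [SetLike.mem_coe, RingHom.mem_ker, AlgHom.toRingHom_eq_coe, RingHom.coe_coe]
    rw [killF, aeval_X]
    simp [hi]
  · intro p hp
    simp only [RingHom.mem_ker, AlgHom.toRingHom_eq_coe, RingHom.coe_coe] at hp
    rw [mem_Pvar]
    intro m hm
    by_contra hbad
    push_neg at hbad
    -- coefficient of m in killF p equals coeff of m in p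
    have hco : coeff m (killF k F p) = coeff m p := by
      conv_lhs => rw [p.as_sum, map_sum]
      rw [coeff_sum]
      rw [Finset.sum_eq_single m]
      · rw [killF_monomial_of_clean _ hbad, coeff_monomial, if_pos rfl]
      · intro b _ hbm
        by_cases hcl : ∀ i ∈ F, b i = 0
        · rw [killF_monomial_of_clean _ hcl, coeff_monomial, if_neg hbm]
        · push_neg at hcl
          obtain ⟨i, hiF, hbi⟩ := hcl
          rw [killF_monomial_of_dirty _ hiF hbi, coeff_zero]
      · intro hmm
        exact absurd hm hmm
    rw [hp, coeff_zero] at hco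
    exact (MvPolynomial.mem_support_iff.mp hm) hco.symm

instance Pvar_isPrime (F : Set (Fin n)) : (Pvar k F).IsPrime := by
  rw [Pvar_eq_ker]
  exact RingHom.ker_isPrime _



lemma mem_Pvar_aux {F : Set (Fin n)} {p : MvPolynomial (Fin n) k} :
    p ∈ Ideal.span (X '' F : Set (MvPolynomial (Fin n) k)) ↔
      ∀ m ∈ p.support, ∃ i ∈ F, m i ≠ 0 :=
  mem_ideal_span_X_image

lemma mem_satAt {R : Type*} [CommRing R] {J P : Ideal R} [P.IsPrime] {x : R} :
    x ∈ satAt J P ↔ ∃ s, s ∉ P ∧ s * x ∈ J := by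
  rw [satAt, Ideal.mem_comap, ← IsLocalization.mk'_one (M := P.primeCompl) (Localization.AtPrime P) x,
    IsLocalization.mk'_mem_map_algebraMap_iff P.primeCompl]
  exact ⟨fun ⟨s, hs, h⟩ => ⟨s, hs, h⟩, fun ⟨s, hs, h⟩ => ⟨s, hs, h⟩⟩


/-- total degree in the variables of `F` -/
noncomputable def degF (F : Set (Fin n)) (m : Fin n →₀ ℕ) : ℕ :=
  ∑ i ∈ Finset.univ.filter (· ∈ F), m i

lemma degF_add (F : Set (Fin n)) (a b : Fin n →₀ ℕ) :
    degF F (a + b) = degF F a + degF F b := by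
  simp [degF, Finset.sum_add_distrib]

lemma degF_eq_zero_iff {F : Set (Fin n)} {m : Fin n →₀ ℕ} :
    degF F m = 0 ↔ ∀ i ∈ F, m i = 0 := by
  simp [degF, Finset.sum_eq_zero_iff]

/-- the key used to pick extremal monomials: prefer small `F`-degree, then large lex -/
noncomputable def K (F : Set (Fin n)) (m : Fin n →₀ ℕ) : ℕᵒᵈ ×ₗ Lex (Fin n →₀ ℕ) :=
  toLex (OrderDual.toDual (degF F m), toLex m)

lemma K_le_iff {F : Set (Fin n)} {a b : Fin n →₀ ℕ} :
    K F a ≤ K F b ↔ degF F b < degF F a ∨ (degF F b = degF F a ∧ toLex a ≤ toLex b) := by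
  rw [K, K, Prod.Lex.le_iff]
  constructor
  · rintro (h | ⟨h1, h2⟩)
    · exact Or.inl h
    · exact Or.inr ⟨(OrderDual.toDual_inj.mp h1).symm, h2⟩
  · rintro (h | ⟨h1, h2⟩)
    · exact Or.inl h
    · exact Or.inr ⟨OrderDual.toDual_inj.mpr h1.symm, h2⟩

/-- unique decomposition of the sum of the two maxima -/
lemma K_add_eq {F : Set (Fin n)} {c c' m m' : Fin n →₀ ℕ}
    (hc : K F c ≤ K F c') (hm : K F m ≤ K F m') (h : c + m = c' + m') :
    c = c' ∧ m = m' := by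
  have hdeg : degF F c + degF F m = degF F c' + degF F m' := by
    rw [← degF_add, ← degF_add, h]
  rw [K_le_iff] at hc hm
  have hdc : degF F c = degF F c' := by
    rcases hc with h1 | ⟨h1, _⟩
    · rcases hm with h2 | ⟨h2, _⟩ <;> omega
    · omega
  have hdm : degF F m = degF F m' := by omega
  replace hc : toLex c ≤ toLex c' := by
    rcases hc with h1 | ⟨_, h2⟩
    · omega
    · exact h2
  replace hm : toLex m ≤ toLex m' := by
    rcases hm with h1 | ⟨_, h2⟩
    · omega
    · exact h2
  have hsum : toLex c + toLex m = toLex c' + toLex m' := by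
    show toLex (c + m) = toLex (c' + m')
    rw [h]
  rcases hc.lt_or_eq with hlt | heq
  · exact absurd hsum (ne_of_lt (add_lt_add_of_lt_of_le hlt hm))
  · constructor
    · exact toLex.injective heq
    · apply toLex.injective
      have := hsum
      rw [heq] at this
      exact add_left_cancel this


lemma monSpan_colon {F : Set (Fin n)} {S : Set (Fin n →₀ ℕ)}
    (hS : ∀ a ∈ S, ∀ i, a i ≠ 0 → i ∈ F) {s x : MvPolynomial (Fin n) k}
    (hs : s ∉ Ideal.span (X '' F : Set (MvPolynomial (Fin n) k)))
    (h : s * x ∈ Ideal.span ((fun a => monomial a (1 : k)) '' S)) :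
    x ∈ Ideal.span ((fun a => monomial a (1 : k)) '' S) := by
  classical
  set Q := Ideal.span ((fun a => monomial a (1 : k)) '' S) with hQ
  set good : (Fin n →₀ ℕ) → Prop := fun m => ∃ a ∈ S, a ≤ m with hgood
  set T : Finset (Fin n →₀ ℕ) := x.support.filter (fun m => ¬ good m) with hT
  set xg : MvPolynomial (Fin n) k :=
    ∑ m ∈ x.support.filter (fun m => good m), monomial m (x.coeff m) with hxgdef
  set xb : MvPolynomial (Fin n) k := ∑ m ∈ T, monomial m (x.coeff m) with hxbdef
  have hx : x = xg + xb := by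
    rw [hxgdef, hxbdef, hT, Finset.sum_filter_add_sum_filter_not]
    exact x.as_sum
  have hxg : xg ∈ Q :=
    Ideal.sum_mem _ (fun m hm => by
      rw [hQ, mem_ideal_span_monomial_image]
      intro m' hm'
      have : m' = m := Finset.mem_singleton.mp (support_monomial_subset hm')
      subst this
      exact (Finset.mem_filter.mp hm).2)
  have hxb : s * xb ∈ Q := by
    have heq : s * xb = s * x - s * xg := by rw [hx]; ring
    rw [heq]
    exact Ideal.sub_mem _ h (Ideal.mul_mem_left _ _ hxg)
  have hcoeff : ∀ m', xb.coeff m' = if m' ∈ T then x.coeff m' else 0 := by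
    intro m'
    rw [hxbdef, coeff_sum]
    simp_rw [coeff_monomial]
    exact Finset.sum_ite_eq' T m' _
  have hsupp : xb.support = T := by
    ext m'
    rw [mem_support_iff, hcoeff]
    constructor
    · intro hne
      by_contra hC
      simp [hC] at hne
    · intro hmem
      rw [if_pos hmem]
      exact mem_support_iff.mp (Finset.mem_filter.mp hmem).1
  suffices hxb0 : xb = 0 by
    rw [hx, hxb0, add_zero]; exact hxg
  by_contra hne
  have hbne : xb.support.Nonempty :=
    Finset.nonempty_iff_ne_empty.mpr (fun hemp => hne (support_eq_empty.mp hemp))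
  obtain ⟨c0, hc0s, hc0⟩ : ∃ c0 ∈ s.support, ∀ i ∈ F, c0 i = 0 := by
    by_contra hc
    push_neg at hc
    exact hs (mem_Pvar_aux.mpr (fun m hm => hc m hm))
  obtain ⟨cst, hcst, hcmax⟩ := Finset.exists_max_image s.support (K F) ⟨c0, hc0s⟩
  obtain ⟨mst, hmst, hmmax⟩ := Finset.exists_max_image xb.support (K F) hbne
  have hcstF : ∀ i ∈ F, cst i = 0 := by
    have hk := hcmax c0 hc0s
    rw [K_le_iff] at hk
    have h0 : degF F c0 = 0 := degF_eq_zero_iff.mpr hc0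
    have hz : degF F cst = 0 := by
      rcases hk with h1 | ⟨h1, _⟩ <;> omega
    exact degF_eq_zero_iff.mp hz
  have hckey : coeff (cst + mst) (s * xb) = s.coeff cst * xb.coeff mst := by
    have hsingle := Finset.sum_eq_single_of_mem
      (f := fun p : (Fin n →₀ ℕ) × (Fin n →₀ ℕ) => coeff p.1 s * coeff p.2 xb)
      (cst, mst) (Finset.HasAntidiagonal.mem_antidiagonal.mpr rfl) ?_
    · rw [coeff_mul, hsingle]
    · rintro ⟨c, m⟩ hcm hne'
      rw [Finset.HasAntidiagonal.mem_antidiagonal] at hcm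
      by_cases hcs : c ∈ s.support
      · by_cases hmx : m ∈ xb.support
        · exfalso
          obtain ⟨rfl, rfl⟩ := K_add_eq (hcmax c hcs) (hmmax m hmx) hcm
          exact hne' rfl
        · simp only []
          rw [notMem_support_iff.mp hmx, mul_zero]
      · simp only []
        rw [notMem_support_iff.mp hcs, zero_mul]
  have hne0 : coeff (cst + mst) (s * xb) ≠ 0 := by
    rw [hckey]
    exact mul_ne_zero (mem_support_iff.mp hcst) (mem_support_iff.mp hmst)
  obtain ⟨a, haS, hale⟩ :=
    (mem_ideal_span_monomial_image.mp hxb) (cst + mst) (mem_support_iff.mpr hne0)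
  have hamst : a ≤ mst := by
    rw [Finsupp.le_def]
    intro i
    by_cases hiF : i ∈ F
    · have := Finsupp.le_def.mp hale i
      simp only [Finsupp.add_apply] at this
      rw [hcstF i hiF, zero_add] at this
      exact this
    · have : a i = 0 := by
        by_contra hai
        exact hiF (hS a haS i hai)
      omega
  have hgoodm : good mst := ⟨a, haS, hamst⟩
  rw [hsupp] at hmst
  exact (Finset.mem_filter.mp hmst).2 hgoodm

/-- restriction of an exponent to the variables of `F` -/
noncomputable def resF (F : Set (Fin n)) (a : Fin n →₀ ℕ) : Fin n →₀ ℕ :=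
  Finsupp.filter (· ∈ F) a

lemma resF_apply (F : Set (Fin n)) (a : Fin n →₀ ℕ) (i : Fin n) :
    resF F a i = if i ∈ F then a i else 0 := Finsupp.filter_apply _ _ _

lemma resF_add (F : Set (Fin n)) (a b : Fin n →₀ ℕ) :
    resF F (a + b) = resF F a + resF F b := Finsupp.filter_add

lemma resF_zero (F : Set (Fin n)) : resF F 0 = 0 := Finsupp.filter_zero _

lemma resF_compl_add (F : Set (Fin n)) (a : Fin n →₀ ℕ) :
    Finsupp.filter (fun i => i ∉ F) a + resF F a = a := by
  ext i
  rw [Finsupp.add_apply, Finsupp.filter_apply, resF_apply]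
  by_cases hi : i ∈ F <;> simp [hi]

/-- monomial generator decomposition -/
lemma mon_factor (F : Set (Fin n)) (a : Fin n →₀ ℕ) :
    (monomial (Finsupp.filter (fun i => i ∉ F) a) (1 : k)) * monomial (resF F a) 1
      = monomial a 1 := by
  rw [monomial_mul, one_mul, resF_compl_add]

lemma monomial_mem_monSpan {S : Set (Fin n →₀ ℕ)} {a : Fin n →₀ ℕ} {c : k}
    (h : ∃ b ∈ S, b ≤ a) :
    monomial a c ∈ Ideal.span ((fun a => monomial a (1 : k)) '' S) := by
  rw [mem_ideal_span_monomial_image]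
  intro m hm
  have : m = a := Finset.mem_singleton.mp (support_monomial_subset hm)
  subst this; exact h

lemma monomial_not_mem_Pvar {F : Set (Fin n)} {a : Fin n →₀ ℕ}
    (h : ∀ i ∈ F, a i = 0) :
    (monomial a (1 : k)) ∉ Ideal.span (X '' F : Set (MvPolynomial (Fin n) k)) := by
  rw [mem_ideal_span_X_image]
  push_neg
  refine ⟨a, ?_, fun i hi => h i hi⟩
  rw [mem_support_iff, coeff_monomial, if_pos rfl]
  exact one_ne_zero

/-- the span of a monomial set is contained in the span of its F-restrictions -/
lemma monSpan_le_resF_span (F : Set (Fin n)) (S : Set (Fin n →₀ ℕ)) :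
    Ideal.span ((fun a => monomial a (1 : k)) '' S)
      ≤ Ideal.span ((fun a => monomial a (1 : k)) '' (resF F '' S)) := by
  rw [Ideal.span_le]
  rintro _ ⟨a, ha, rfl⟩
  simp only [SetLike.mem_coe]
  show monomial a (1 : k) ∈ _
  rw [← mon_factor F a]
  exact Ideal.mul_mem_left _ _ (Ideal.subset_span ⟨resF F a, ⟨a, ha, rfl⟩, rfl⟩)

/-- key computation: the saturation of a monomial ideal at `Pvar F` -/
lemma satAt_monSpan (F : Set (Fin n)) (S : Set (Fin n →₀ ℕ))
    (P : Ideal (MvPolynomial (Fin n) k)) [P.IsPrime]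
    (hPF : P = Ideal.span (X '' F : Set (MvPolynomial (Fin n) k))) :
    satAt (Ideal.span ((fun a => monomial a (1 : k)) '' S)) P
      = Ideal.span ((fun a => monomial a (1 : k)) '' (resF F '' S)) := by
  apply le_antisymm
  · intro x hx
    obtain ⟨s, hs, hsx⟩ := mem_satAt.mp hx
    rw [hPF] at hs
    refine monSpan_colon ?_ hs (monSpan_le_resF_span F S hsx)
    rintro _ ⟨a, _, rfl⟩ i hi
    rw [resF_apply] at hi
    by_contra hiF
    simp [hiF] at hi
  · rw [Ideal.span_le]
    rintro _ ⟨_, ⟨a, ha, rfl⟩, rfl⟩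
    rw [SetLike.mem_coe, mem_satAt]
    refine ⟨monomial (Finsupp.filter (fun i => i ∉ F) a) 1, ?_, ?_⟩
    · rw [hPF]
      apply monomial_not_mem_Pvar
      intro i hi
      rw [Finsupp.filter_apply]
      simp [hi]
    · rw [mon_factor]
      exact Ideal.subset_span ⟨a, ha, rfl⟩

/-- iterated sumset -/
noncomputable def Spow : ℕ → Set (Fin n →₀ ℕ) → Set (Fin n →₀ ℕ)
  | 0, _ => {0}
  | t + 1, S => Set.image2 (· + ·) S (Spow t S)

lemma monSpan_mul_set (S T : Set (Fin n →₀ ℕ)) :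
    ((fun a => monomial a (1 : k)) '' S) * ((fun a => monomial a (1 : k)) '' T)
      = (fun a => monomial a (1 : k)) '' (Set.image2 (· + ·) S T) := by
  rw [← Set.image2_mul, Set.image2_image_left, Set.image2_image_right, Set.image_image2]
  apply Set.image2_congr
  intro a _ b _
  rw [monomial_mul, one_mul]

lemma monSpan_pow (S : Set (Fin n →₀ ℕ)) (t : ℕ) :
    Ideal.span ((fun a => monomial a (1 : k)) '' S) ^ t
      = Ideal.span ((fun a => monomial a (1 : k)) '' (Spow t S)) := by
  induction t with
  | zero =>
    simp only [pow_zero, Spow, Set.image_singleton]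
    rw [monomial_zero', C_1, Ideal.span_singleton_one, eq_comm, Ideal.one_eq_top]
  | succ t ih =>
    rw [pow_succ', ih, Ideal.span_mul_span', monSpan_mul_set]
    rfl

lemma resF_Spow (F : Set (Fin n)) (S : Set (Fin n →₀ ℕ)) (t : ℕ) :
    resF F '' (Spow t S) = Spow t (resF F '' S) := by
  induction t with
  | zero => simp [Spow, resF_zero]
  | succ t ih =>
    show resF F '' Set.image2 (· + ·) S (Spow t S) = Set.image2 (· + ·) _ _
    rw [Set.image_image2, ← ih, Set.image2_image_left, Set.image2_image_right]
    apply Set.image2_congr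
    intro a _ b _
    exact resF_add F a b

/-- the main commutation: saturating the power equals the power of the saturation -/
lemma satAt_pow_monSpan (F : Set (Fin n)) (S : Set (Fin n →₀ ℕ))
    (P : Ideal (MvPolynomial (Fin n) k)) [P.IsPrime]
    (hPF : P = Ideal.span (X '' F : Set (MvPolynomial (Fin n) k))) (t : ℕ) :
    satAt (Ideal.span ((fun a => monomial a (1 : k)) '' S) ^ t) P
      = satAt (Ideal.span ((fun a => monomial a (1 : k)) '' S)) P ^ t := by
  rw [monSpan_pow, satAt_monSpan F _ P hPF, satAt_monSpan F _ P hPF, resF_Spow,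
    monSpan_pow]


lemma mon_eq_prod (a : Fin n →₀ ℕ) :
    (monomial a (1 : k)) = ∏ i ∈ a.support, X i ^ a i := by
  rw [monomial_eq, C_1, one_mul]
  rfl

lemma exists_var_of_mon_mem {P : Ideal (MvPolynomial (Fin n) k)} (hprime : P.IsPrime)
    {a : Fin n →₀ ℕ} (hmem : monomial a (1 : k) ∈ P) :
    ∃ i, a i ≠ 0 ∧ X i ∈ P := by
  haveI := hprime
  rw [mon_eq_prod] at hmem
  obtain ⟨i, his, hXi⟩ := (Ideal.IsPrime.prod_mem_iff).mp hmem
  refine ⟨i, Finsupp.mem_support_iff.mp his, ?_⟩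
  exact hprime.mem_of_pow_mem _ hXi

lemma minimalPrime_shape {S : Set (Fin n →₀ ℕ)} {P : Ideal (MvPolynomial (Fin n) k)}
    (hP : P ∈ (Ideal.span ((fun a => monomial a (1 : k)) '' S)).minimalPrimes) :
    P = Ideal.span (X '' {i | X i ∈ P}) := by
  obtain ⟨⟨hprime, hIP⟩, hmin⟩ := hP
  have hPvar_le : Ideal.span (X '' {i | X i ∈ P}) ≤ P := by
    rw [Ideal.span_le]; rintro _ ⟨i, hi, rfl⟩; exact hi
  have hI_le : Ideal.span ((fun a => monomial a (1 : k)) '' S)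
      ≤ Ideal.span (X '' {i | X i ∈ P}) := by
    rw [Ideal.span_le]
    rintro _ ⟨a, ha, rfl⟩
    simp only [SetLike.mem_coe]
    show monomial a (1 : k) ∈ _
    obtain ⟨i, hai, hXi⟩ := exists_var_of_mon_mem hprime (hIP (Ideal.subset_span ⟨a, ha, rfl⟩))
    rw [mem_ideal_span_X_image]
    intro m hm
    have : m = a := Finset.mem_singleton.mp (support_monomial_subset hm)
    subst this
    exact ⟨i, hXi, hai⟩
  exact le_antisymm (hmin ⟨Pvar_isPrime _, hI_le⟩ hPvar_le) hPvar_le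

lemma exists_purepower {S : Set (Fin n →₀ ℕ)} {P : Ideal (MvPolynomial (Fin n) k)}
    (hP : P ∈ (Ideal.span ((fun a => monomial a (1 : k)) '' S)).minimalPrimes)
    {i : Fin n} (hi : X i ∈ P) :
    ∃ N : ℕ, (X i : MvPolynomial (Fin n) k) ^ N
      ∈ @satAt _ _ (Ideal.span ((fun a => monomial a (1 : k)) '' S)) P hP.1.1 := by
  haveI : P.IsPrime := hP.1.1
  have hshape := minimalPrime_shape hP
  obtain ⟨a, haS, hpure⟩ : ∃ a ∈ S, ∀ j, X j ∈ P → j ≠ i → a j = 0 := by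
    by_contra hc
    push_neg at hc
    have hI_le : Ideal.span ((fun a => monomial a (1 : k)) '' S)
        ≤ Ideal.span (X '' {j | X j ∈ P ∧ j ≠ i}) := by
      rw [Ideal.span_le]
      rintro _ ⟨a, ha, rfl⟩
      simp only [SetLike.mem_coe]
      show monomial a (1 : k) ∈ _
      obtain ⟨j, hjP, hjne, haj⟩ := hc a ha
      rw [mem_ideal_span_X_image]
      intro m hm
      have : m = a := Finset.mem_singleton.mp (support_monomial_subset hm)
      subst this
      exact ⟨j, ⟨hjP, hjne⟩, haj⟩
    have hle : Ideal.span (X '' {j | X j ∈ P ∧ j ≠ i}) ≤ P := by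
      rw [Ideal.span_le]; rintro _ ⟨j, hj, rfl⟩; exact hj.1
    have := hP.2 ⟨Pvar_isPrime _, hI_le⟩ hle
    have hXi := this hi
    rw [Pvar, mem_ideal_span_X_image] at hXi
    obtain ⟨j, ⟨_, hjne⟩, hj1⟩ := hXi (Finsupp.single i 1)
      (by rw [support_X]; exact Finset.mem_singleton_self _)
    rw [Finsupp.single_apply] at hj1
    by_cases hij : i = j
    · exact hjne hij.symm
    · simp [hij] at hj1
  have hai : a i ≠ 0 := by
    obtain ⟨j, haj, hXj⟩ :=
      exists_var_of_mon_mem hP.1.1 (hP.1.2 (Ideal.subset_span ⟨a, haS, rfl⟩))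
    have hji : j = i := by
      by_contra hne
      exact haj (hpure j hXj hne)
    rwa [← hji]
  refine ⟨a i, ?_⟩
  rw [satAt_monSpan {j | X j ∈ P} S P hshape, X_pow_eq_monomial]
  apply monomial_mem_monSpan
  refine ⟨resF {j | X j ∈ P} a, ⟨a, haS, rfl⟩, ?_⟩
  rw [Finsupp.le_def]
  intro j
  rw [resF, Finsupp.filter_apply, Finsupp.single_apply]
  by_cases hjF : X j ∈ P
  · by_cases hji : j = i
    · subst hji
      simp [Set.mem_setOf_eq, hjF]
    · rw [if_pos (show j ∈ {j | X j ∈ P} from hjF), hpure j hjF hji]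
      exact Nat.zero_le _
  · rw [if_neg (show j ∉ {j | X j ∈ P} from hjF)]
    exact Nat.zero_le _

lemma minPrimes_finite (S : Set (Fin n →₀ ℕ)) :
    (Ideal.span ((fun a => monomial a (1 : k)) '' S)).minimalPrimes.Finite := by
  apply Set.Finite.of_finite_image (f := fun P : Ideal (MvPolynomial (Fin n) k) => {i | X i ∈ P})
  · exact Set.toFinite _
  · intro P hP Q hQ h
    simp only at h
    rw [minimalPrime_shape hP, minimalPrime_shape hQ, h]



lemma resF_suppIn (F : Set (Fin n)) (S : Set (Fin n →₀ ℕ)) :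
    ∀ a ∈ resF F '' S, ∀ i, a i ≠ 0 → i ∈ F := by
  rintro _ ⟨a, _, rfl⟩ i hi
  rw [resF, Finsupp.filter_apply] at hi
  by_contra hiF
  simp [hiF] at hi

lemma Spow_suppIn {F : Set (Fin n)} {S : Set (Fin n →₀ ℕ)}
    (hS : ∀ a ∈ S, ∀ i, a i ≠ 0 → i ∈ F) (t : ℕ) :
    ∀ a ∈ Spow t S, ∀ i, a i ≠ 0 → i ∈ F := by
  induction t with
  | zero =>
    rintro a ha i hi
    rw [show a = 0 from ha] at hi
    simp at hi
  | succ t ih =>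
    rintro _ ⟨b, hb, c, hc, rfl⟩ i hi
    rw [Finsupp.add_apply] at hi
    by_cases hbi : b i = 0
    · exact ih c hc i (by omega)
    · exact hS b hb i hbi

lemma prod_monomial_one {ι : Type*} (s : Finset ι) (f : ι → (Fin n →₀ ℕ)) :
    (∏ i ∈ s, monomial (f i) (1 : k)) = monomial (∑ i ∈ s, f i) 1 := by
  induction s using Finset.cons_induction with
  | empty => simp [monomial_zero']
  | cons a s ha ih => rw [Finset.prod_cons, Finset.sum_cons, ih, monomial_mul, one_mul]

end Stmt3Aux

/- **Integral closedness of symbolic powers of monomial ideals.**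
For a monomial ideal `I`, the symbolic power `I^{(t)}` is integrally closed if
and only if `I_F^t` is integrally closed for every minimal prime `P_F` of `I`,
where `I_F` denotes the `P_F`-primary component of `I`. -/
open Stmt3Aux in
/-- **Integral closedness of symbolic powers of monomial ideals.**
For a monomial ideal `I`, the symbolic power `I^{(t)}` is integrally closed if
and only if `I_F^t` is integrally closed for every minimal prime `P_F` of `I`,
where `I_F` denotes the `P_F`-primary component of `I`. -/
theorem stmt3 {k : Type*} [Field k] {n : ℕ}
    (I : Ideal (MvPolynomial (Fin n) k)) (hmon : IsMonomialIdeal I)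
    (t : ℕ) (ht : 1 ≤ t) :
    IsIntegrallyClosedIdeal (symbolicPower I t) ↔
      ∀ (P : Ideal (MvPolynomial (Fin n) k)) (hP : P ∈ I.minimalPrimes),
        IsIntegrallyClosedIdeal ((@satAt _ _ I P hP.1.1) ^ t) := by
  classical
  obtain ⟨S, rfl⟩ := hmon
  set I : Ideal (MvPolynomial (Fin n) k) :=
    Ideal.span ((fun a => (monomial a (1 : k))) '' S) with hIdef
  have hAEQ : ∀ (P : Ideal (MvPolynomial (Fin n) k)) (hP : P ∈ I.minimalPrimes),
      @satAt _ _ (I ^ t) P hP.1.1 = (@satAt _ _ I P hP.1.1) ^ t := by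
    intro P hP
    haveI := hP.1.1
    exact satAt_pow_monSpan {i | X i ∈ P} S P (minimalPrime_shape hP) t
  have hsymb : symbolicPower I t
      = ⨅ (P : Ideal (MvPolynomial (Fin n) k)) (hP : P ∈ I.minimalPrimes),
        (@satAt _ _ I P hP.1.1) ^ t := by
    rw [symbolicPower]
    exact iInf_congr fun P => iInf_congr fun hP => hAEQ P hP
  have hsymb_le : ∀ (P : Ideal (MvPolynomial (Fin n) k)) (hP : P ∈ I.minimalPrimes),
      symbolicPower I t ≤ (@satAt _ _ I P hP.1.1) ^ t := by
    intro P hP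
    rw [hsymb]
    exact iInf_le_of_le P (iInf_le _ hP)
  constructor
  · -- if the symbolic power is integrally closed, so is each component power
    intro hcl P0 hP0 x hx
    obtain ⟨d, hd, a, ha, heq⟩ := hx
    haveI hprime0 : P0.IsPrime := hP0.1.1
    have hshape0 : P0 = Ideal.span (X '' {i | X i ∈ P0}) := minimalPrime_shape hP0
    set F0 : Set (Fin n) := {i | X i ∈ P0} with hF0
    have hfin : I.minimalPrimes.Finite := minPrimes_finite S
    set D : Finset (Ideal (MvPolynomial (Fin n) k)) := hfin.toFinset.erase P0 with hD
    have hmult : ∀ P ∈ D, ∃ b : Fin n →₀ ℕ, (∀ i ∈ F0, b i = 0) ∧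
        ∀ (hP : P ∈ I.minimalPrimes),
          monomial b (1 : k) ∈ (@satAt _ _ I P hP.1.1) ^ t := by
      intro P hPD
      have hPmem : P ∈ I.minimalPrimes := hfin.mem_toFinset.mp (Finset.mem_of_mem_erase hPD)
      have hPne : P ≠ P0 := Finset.ne_of_mem_erase hPD
      have hnotle : ¬ ({i | X i ∈ P} ⊆ F0) := by
        intro hsub
        apply hPne
        have hle : P ≤ P0 := by
          rw [minimalPrime_shape hPmem, hshape0]
          exact Ideal.span_mono (Set.image_mono hsub)
        exact le_antisymm hle (hP0.2 hPmem.1 hle)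
      obtain ⟨i, hiP, hinot⟩ := Set.not_subset.mp hnotle
      obtain ⟨N, hN⟩ := exists_purepower hPmem hiP
      refine ⟨Finsupp.single i (N * t), ?_, ?_⟩
      · intro j hj
        rw [Finsupp.single_apply]
        by_cases hij : i = j
        · subst hij; exact absurd hj hinot
        · rw [if_neg hij]
      · intro hP
        have hmem : ((X i : MvPolynomial (Fin n) k) ^ N) ^ t
            ∈ (@satAt _ _ I P hP.1.1) ^ t := Ideal.pow_mem_pow hN t
        rwa [← pow_mul, X_pow_eq_monomial] at hmem
    choose bfun hb0 hbmem using hmult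
    set m : MvPolynomial (Fin n) k :=
      ∏ P ∈ D.attach, monomial (bfun P.1 P.2) 1 with hm
    have hmB : m = monomial (∑ P ∈ D.attach, bfun P.1 P.2) 1 := prod_monomial_one _ _
    have hmclean : ∀ i ∈ F0, (∑ P ∈ D.attach, bfun P.1 P.2 : Fin n →₀ ℕ) i = 0 := by
      intro i hi
      rw [Finsupp.finset_sum_apply]
      exact Finset.sum_eq_zero fun P _ => hb0 P.1 P.2 i hi
    have hmnot : m ∉ P0 := by
      rw [hshape0, hmB]
      exact monomial_not_mem_Pvar hmclean
    have hmmem : ∀ (P : Ideal (MvPolynomial (Fin n) k)) (hP : P ∈ I.minimalPrimes),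
        P ≠ P0 → m ∈ (@satAt _ _ I P hP.1.1) ^ t := by
      intro P hP hne
      have hPD : P ∈ D := Finset.mem_erase.mpr ⟨hne, hfin.mem_toFinset.mpr hP⟩
      have hsplit := Finset.mul_prod_erase D.attach
        (fun P => monomial (bfun P.1 P.2) (1 : k)) (Finset.mem_attach D ⟨P, hPD⟩)
      rw [hm, ← hsplit]
      exact Ideal.mul_mem_right _ _ (hbmem P hPD hP)
    have hT_le : Ideal.span {m} * (@satAt _ _ I P0 hP0.1.1) ^ t ≤ symbolicPower I t := by
      rw [hsymb]
      refine le_iInf₂ fun P hP => ?_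
      by_cases hPe : P = P0
      · subst hPe
        exact Ideal.mul_le_right
      · refine le_trans (Ideal.mul_le_left (I := Ideal.span {m})) ?_
        rw [Ideal.span_singleton_le_iff_mem]
        exact hmmem P hP hPe
    set b : ℕ → MvPolynomial (Fin n) k := fun j => a j * m ^ j with hb
    have hbj : ∀ i, 1 ≤ i → i ≤ d → b i ∈ (symbolicPower I t) ^ i := by
      intro i h1 h2
      have h1m : m ^ i ∈ (Ideal.span {m} : Ideal (MvPolynomial (Fin n) k)) ^ i :=
        Ideal.pow_mem_pow (Ideal.mem_span_singleton_self m) i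
      have hmul : b i ∈ ((@satAt _ _ I P0 hP0.1.1) ^ t) ^ i * (Ideal.span {m}) ^ i :=
        Ideal.mul_mem_mul (ha i h1 h2) h1m
      rw [← mul_pow] at hmul
      refine Ideal.pow_right_mono ?_ i hmul
      rw [mul_comm]
      exact hT_le
    have heq' : (m * x) ^ d + ∑ i ∈ Finset.range d, b (d - i) * (m * x) ^ i = 0 := by
      have hterm : ∀ i ∈ Finset.range d,
          b (d - i) * (m * x) ^ i = m ^ d * (a (d - i) * x ^ i) := by
        intro i hi
        have hid : i ≤ d := le_of_lt (Finset.mem_range.mp hi)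
        show a (d - i) * m ^ (d - i) * (m * x) ^ i = _
        rw [mul_pow]
        calc a (d - i) * m ^ (d - i) * (m ^ i * x ^ i)
            = m ^ (d - i) * m ^ i * (a (d - i) * x ^ i) := by ring
          _ = m ^ d * (a (d - i) * x ^ i) := by
              rw [← pow_add, Nat.sub_add_cancel hid]
      rw [Finset.sum_congr rfl hterm, ← Finset.mul_sum, mul_pow]
      calc m ^ d * x ^ d + m ^ d * ∑ i ∈ Finset.range d, a (d - i) * x ^ i
          = m ^ d * (x ^ d + ∑ i ∈ Finset.range d, a (d - i) * x ^ i) := by ring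
        _ = 0 := by rw [heq, mul_zero]
    have hmx : m * x ∈ symbolicPower I t := hcl (m * x) ⟨d, hd, b, hbj, heq'⟩
    have hmxQ : m * x ∈ (@satAt _ _ I P0 hP0.1.1) ^ t := hsymb_le P0 hP0 hmx
    have hsat0 : @satAt _ _ I P0 hP0.1.1
        = Ideal.span ((fun a => monomial a (1 : k)) '' (resF F0 '' S)) :=
      satAt_monSpan F0 S P0 hshape0
    rw [hsat0, monSpan_pow] at hmxQ ⊢
    exact monSpan_colon (Spow_suppIn (resF_suppIn F0 S) t)
      (hshape0 ▸ hmnot) hmxQ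
  · -- conversely
    intro hall x hx
    obtain ⟨d, hd, a, ha, heq⟩ := hx
    rw [symbolicPower, Submodule.mem_iInf]
    intro P
    rw [Submodule.mem_iInf]
    intro hP
    rw [hAEQ P hP]
    exact hall P hP x ⟨d, hd, a,
      fun i h1 h2 => Ideal.pow_right_mono (hsymb_le P hP) i (ha i h1 h2), heq⟩
end

section
/- Let $m \ge 2$ be an integer and consider the monomial ideals $M = (x^{2m-2}, y^m, z^{2m})^2$, $P = (x^{2m-1}, y^{2m-1})$, and $Q = (z)$ in $k[x,y,z]$. Then $M^t \subseteq P^t + Q^t$ if and only if $t \ge m$. -/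
open MvPolynomial


section Aux
variable {R : Type*} [CommRing R]

lemma span_pair_pow_le' (u v : R) : ∀ (n : ℕ) (J : Ideal R),
    (∀ i, i ≤ n → u ^ i * v ^ (n - i) ∈ J) → Ideal.span {u, v} ^ n ≤ J := by
  intro n
  induction n with
  | zero =>
    intro J h
    rw [pow_zero, Ideal.one_eq_top, top_le_iff, Ideal.eq_top_iff_one]
    simpa using h 0 le_rfl
  | succ n ih =>
    intro J h
    rw [pow_succ, Ideal.mul_le]
    intro r hr s hs
    obtain ⟨p, q, rfl⟩ := Ideal.mem_span_pair.mp hs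
    have hu : r * u ∈ J := by
      refine Ideal.mem_colon_span_singleton.mp (ih (J.colon (Ideal.span {u})) (fun i hi => ?_) hr)
      rw [Ideal.mem_colon_span_singleton,
        show u ^ i * v ^ (n - i) * u = u ^ (i + 1) * v ^ (n + 1 - (i + 1)) by
          rw [show n + 1 - (i + 1) = n - i by omega]; ring]
      exact h (i + 1) (by omega)
    have hv : r * v ∈ J := by
      refine Ideal.mem_colon_span_singleton.mp (ih (J.colon (Ideal.span {v})) (fun i hi => ?_) hr)
      rw [Ideal.mem_colon_span_singleton,
        show u ^ i * v ^ (n - i) * v = u ^ i * v ^ (n + 1 - i) by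
          rw [show n + 1 - i = (n - i) + 1 by omega]; ring]
      exact h i (by omega)
    rw [show r * (p * u + q * v) = p * (r * u) + q * (r * v) by ring]
    exact J.add_mem (J.mul_mem_left _ hu) (J.mul_mem_left _ hv)

lemma span_triple_pow_le' (g₁ g₂ g₃ : R) : ∀ (n : ℕ) (J : Ideal R),
    (∀ a b c, a + b + c = n → g₁ ^ a * g₂ ^ b * g₃ ^ c ∈ J) →
    Ideal.span {g₁, g₂, g₃} ^ n ≤ J := by
  intro n
  induction n with
  | zero =>
    intro J h
    rw [pow_zero, Ideal.one_eq_top, top_le_iff, Ideal.eq_top_iff_one]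
    simpa using h 0 0 0 rfl
  | succ n ih =>
    intro J h
    rw [pow_succ, Ideal.mul_le]
    intro r hr s hs
    have h1 : r * g₁ ∈ J := by
      refine Ideal.mem_colon_span_singleton.mp (ih (J.colon (Ideal.span {g₁})) (fun a b c habc => ?_) hr)
      rw [Ideal.mem_colon_span_singleton,
        show g₁ ^ a * g₂ ^ b * g₃ ^ c * g₁ = g₁ ^ (a + 1) * g₂ ^ b * g₃ ^ c by ring]
      exact h (a + 1) b c (by omega)
    have h2 : r * g₂ ∈ J := by
      refine Ideal.mem_colon_span_singleton.mp (ih (J.colon (Ideal.span {g₂})) (fun a b c habc => ?_) hr)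
      rw [Ideal.mem_colon_span_singleton,
        show g₁ ^ a * g₂ ^ b * g₃ ^ c * g₂ = g₁ ^ a * g₂ ^ (b + 1) * g₃ ^ c by ring]
      exact h a (b + 1) c (by omega)
    have h3 : r * g₃ ∈ J := by
      refine Ideal.mem_colon_span_singleton.mp (ih (J.colon (Ideal.span {g₃})) (fun a b c habc => ?_) hr)
      rw [Ideal.mem_colon_span_singleton,
        show g₁ ^ a * g₂ ^ b * g₃ ^ c * g₃ = g₁ ^ a * g₂ ^ b * g₃ ^ (c + 1) by ring]
      exact h a b (c + 1) (by omega)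
    obtain ⟨p, z, hz, rfl⟩ := Ideal.mem_span_insert.mp hs
    obtain ⟨q, w, rfl⟩ := Ideal.mem_span_pair.mp hz
    rw [show r * (p * g₁ + (q * g₂ + w * g₃)) = p * (r * g₁) + (q * (r * g₂) + w * (r * g₃)) by ring]
    exact J.add_mem (J.mul_mem_left _ h1) (J.add_mem (J.mul_mem_left _ h2) (J.mul_mem_left _ h3))

end Aux

lemma arith_exists' (n t a b c : ℕ) (hmt : n + 2 ≤ t)
    (habc : a + b + c = 2 * t) (hc : (2 * n + 4) * c < t) :
    ∃ i, i ≤ t ∧ (2 * n + 3) * i ≤ (2 * n + 2) * a ∧ (2 * n + 3) * (t - i) ≤ (n + 2) * b := by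
  have f1 : (n + 2) * a + (n + 2) * b + (n + 2) * c = 2 * ((n + 2) * t) := by
    rw [← Nat.mul_add, ← Nat.mul_add, habc]; ring
  have hmc2 : (n + 2) * c + 2 ≤ t := by
    rcases Nat.eq_zero_or_pos c with rfl | hc1
    · simp; omega
    · have h1 : (n + 2) * 1 ≤ (n + 2) * c := Nat.mul_le_mul_left _ hc1
      nlinarith
  have hmc3 : (n + 2) * c + (n + 2) ≤ t := by
    rcases Nat.eq_zero_or_pos c with rfl | hc1
    · simp; omega
    · have h1 : (n + 2) * 1 ≤ (n + 2) * c := Nat.mul_le_mul_left _ hc1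
      nlinarith
  by_cases hbig : (2 * n + 3) * t ≤ (2 * n + 2) * a
  · exact ⟨t, le_rfl, hbig, by simp⟩
  · push_neg at hbig
    obtain rfl | rfl | ha2 : a = 0 ∨ a = 1 ∨ 2 ≤ a := by omega
    · refine ⟨0, by omega, by simp, ?_⟩
      simp only [Nat.sub_zero, Nat.mul_zero] at *
      nlinarith
    · refine ⟨0, by omega, by simp, ?_⟩
      simp only [Nat.sub_zero, Nat.mul_one] at *
      nlinarith
    · set F := ((2 * n + 2) * a) / (2 * n + 3) with hF
      have hdm : (2 * n + 3) * F + ((2 * n + 2) * a) % (2 * n + 3) = (2 * n + 2) * a :=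
        Nat.div_add_mod _ _
      set r := ((2 * n + 2) * a) % (2 * n + 3) with hr'
      have hr : r < 2 * n + 3 := Nat.mod_lt _ (by omega)
      have hFt : F < t := by
        rw [hF, Nat.div_lt_iff_lt_mul (by omega : 0 < 2 * n + 3)]
        nlinarith
      have f6 : n * 2 ≤ n * a := Nat.mul_le_mul_left _ ha2
      refine ⟨F, le_of_lt hFt, by nlinarith, ?_⟩
      have e6 : (2 * n + 3) * (t - F) + (2 * n + 3) * F = (2 * n + 3) * t := by
        rw [← Nat.mul_add, Nat.sub_add_cancel (le_of_lt hFt)]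
      nlinarith


/-- **Lemma for type A symbolic depth functions.**  In `k[x,y,z]` with
`M = (x^{2m-2}, y^m, z^{2m})^2`, `P = (x^{2m-1}, y^{2m-1})` and `Q = (z)`,
one has `M^t ⊆ P^t + Q^t` if and only if `t ≥ m`. -/
theorem stmt5 {k : Type*} [Field k] (m t : ℕ) (hm : 2 ≤ m) (ht : 1 ≤ t)
    (M P Q : Ideal (MvPolynomial (Fin 3) k))
    (hM : M = (Ideal.span {(X 0 : MvPolynomial (Fin 3) k) ^ (2*m-2),
      X 1 ^ m, X 2 ^ (2*m)}) ^ 2)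
    (hP : P = Ideal.span {(X 0 : MvPolynomial (Fin 3) k) ^ (2*m-1), X 1 ^ (2*m-1)})
    (hQ : Q = Ideal.span {(X 2 : MvPolynomial (Fin 3) k)}) :
    M ^ t ≤ P ^ t + Q ^ t ↔ m ≤ t := by
  obtain ⟨n, rfl⟩ : ∃ n, m = n + 2 := ⟨m - 2, by omega⟩
  obtain ⟨t', rfl⟩ : ∃ t', t = t' + 1 := ⟨t - 1, by omega⟩
  simp only [show 2 * (n + 2) - 2 = 2 * n + 2 by omega] at hM hP hQ
  simp only [show 2 * (n + 2) - 1 = 2 * n + 3 by omega] at hM hP hQ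
  simp only [show 2 * (n + 2) = 2 * n + 4 by omega] at hM hP hQ
  subst hM hP hQ
  constructor
  · -- forward direction
    intro h
    by_contra hlt
    push_neg at hlt
    set S : Set (Fin 3 →₀ ℕ) :=
      ((fun i : ℕ => Finsupp.single 0 ((2 * n + 3) * i) +
        Finsupp.single 1 ((2 * n + 3) * ((t' + 1) - i))) '' Set.Iic (t' + 1)) ∪
        {Finsupp.single 2 (t' + 1)} with hS
    have hPJ : (Ideal.span {(X 0 : MvPolynomial (Fin 3) k) ^ (2 * n + 3),
        X 1 ^ (2 * n + 3)}) ^ (t' + 1)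
        ≤ Ideal.span ((fun e => monomial e (1 : k)) '' S) := by
      refine span_pair_pow_le' _ _ _ _ (fun i hi => ?_)
      rw [← pow_mul, ← pow_mul, X_pow_eq_monomial, X_pow_eq_monomial, monomial_mul, one_mul]
      exact Ideal.subset_span ⟨_, Or.inl ⟨i, hi, rfl⟩, rfl⟩
    have hQJ : (Ideal.span {(X 2 : MvPolynomial (Fin 3) k)}) ^ (t' + 1)
        ≤ Ideal.span ((fun e => monomial e (1 : k)) '' S) := by
      rw [Ideal.span_singleton_pow, Ideal.span_le, Set.singleton_subset_iff, SetLike.mem_coe,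
        X_pow_eq_monomial]
      exact Ideal.subset_span ⟨_, Or.inr rfl, rfl⟩
    have hsum : (Ideal.span {(X 0 : MvPolynomial (Fin 3) k) ^ (2 * n + 3),
        X 1 ^ (2 * n + 3)}) ^ (t' + 1) + (Ideal.span {(X 2 : MvPolynomial (Fin 3) k)}) ^ (t' + 1)
        ≤ Ideal.span ((fun e => monomial e (1 : k)) '' S) := by
      rw [Ideal.add_eq_sup]; exact sup_le hPJ hQJ
    have hwM : (X 0 ^ (2 * n + 2) * X 1 ^ ((n + 2) * (2 * (t' + 1) - 1)) :
        MvPolynomial (Fin 3) k)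
        ∈ (Ideal.span {(X 0 : MvPolynomial (Fin 3) k) ^ (2 * n + 2),
          X 1 ^ (n + 2), X 2 ^ (2 * n + 4)} ^ 2) ^ (t' + 1) := by
      rw [← pow_mul]
      have h1 : (X 0 ^ (2 * n + 2) : MvPolynomial (Fin 3) k) ∈
          Ideal.span {(X 0 : MvPolynomial (Fin 3) k) ^ (2 * n + 2),
            X 1 ^ (n + 2), X 2 ^ (2 * n + 4)} := Ideal.subset_span (Set.mem_insert _ _)
      have h2 : (X 1 ^ (n + 2) : MvPolynomial (Fin 3) k) ∈
          Ideal.span {(X 0 : MvPolynomial (Fin 3) k) ^ (2 * n + 2),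
            X 1 ^ (n + 2), X 2 ^ (2 * n + 4)} := Ideal.subset_span (by simp)
      have h3 := Ideal.mul_mem_mul h1 (Ideal.pow_mem_pow h2 (2 * (t' + 1) - 1))
      rw [← pow_succ'] at h3
      rw [show 2 * (t' + 1) - 1 + 1 = 2 * (t' + 1) by omega] at h3
      rwa [← pow_mul] at h3
    have hwJ := hsum (h hwM)
    rw [show (X 0 ^ (2 * n + 2) * X 1 ^ ((n + 2) * (2 * (t' + 1) - 1)) :
        MvPolynomial (Fin 3) k)
        = monomial (Finsupp.single 0 (2 * n + 2) +
            Finsupp.single 1 ((n + 2) * (2 * (t' + 1) - 1))) 1 by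
      rw [X_pow_eq_monomial, X_pow_eq_monomial, monomial_mul, one_mul]] at hwJ
    classical
    have hmem : (Finsupp.single 0 (2 * n + 2) +
        Finsupp.single 1 ((n + 2) * (2 * (t' + 1) - 1)) : Fin 3 →₀ ℕ) ∈
        (monomial (Finsupp.single 0 (2 * n + 2) +
          Finsupp.single 1 ((n + 2) * (2 * (t' + 1) - 1))) (1 : k)).support := by
      rw [support_monomial, if_neg one_ne_zero]
      exact Finset.mem_singleton_self _
    obtain ⟨si, hsi, hle⟩ := MvPolynomial.mem_ideal_span_monomial_image.mp hwJ _ hmem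
    rcases hsi with ⟨i, hi, rfl⟩ | rfl
    · have h0 := Finsupp.le_def.mp hle 0
      have h1 := Finsupp.le_def.mp hle 1
      simp only [Finsupp.add_apply, Finsupp.single_eq_same,
        Finsupp.single_eq_of_ne (show (1 : Fin 3) ≠ 0 by decide),
        Finsupp.single_eq_of_ne (show (0 : Fin 3) ≠ 1 by decide),
        add_zero, zero_add] at h0 h1
      have hi0 : i = 0 := by
        rcases Nat.eq_zero_or_pos i with h' | h'
        · exact h'
        · have := Nat.le_mul_of_pos_right (2 * n + 3) h'
          linarith
      subst hi0
      simp only [Nat.sub_zero] at h1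
      rw [show 2 * (t' + 1) - 1 = 2 * t' + 1 by omega] at h1
      nlinarith
    · have h2 := Finsupp.le_def.mp hle 2
      simp only [Finsupp.add_apply, Finsupp.single_eq_same,
        Finsupp.single_eq_of_ne' (show (0 : Fin 3) ≠ 2 by decide),
        Finsupp.single_eq_of_ne' (show (1 : Fin 3) ≠ 2 by decide),
        add_zero] at h2
      omega
  · -- reverse direction
    intro hmt
    rw [← pow_mul, Ideal.add_eq_sup]
    refine span_triple_pow_le' _ _ _ (2 * (t' + 1)) _ (fun a b c habc => ?_)
    by_cases hcase : t' + 1 ≤ (2 * n + 4) * c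
    · apply Ideal.mem_sup_right
      have hz : (X 2 : MvPolynomial (Fin 3) k) ∈
          Ideal.span {(X 2 : MvPolynomial (Fin 3) k)} := Ideal.subset_span rfl
      have hz' := Ideal.pow_mem_pow hz (t' + 1)
      have ecz : (t' + 1) + ((2 * n + 4) * c - (t' + 1)) = (2 * n + 4) * c :=
        Nat.add_sub_cancel' hcase
      have heq : (X 0 ^ (2 * n + 2) : MvPolynomial (Fin 3) k) ^ a * (X 1 ^ (n + 2)) ^ b *
          (X 2 ^ (2 * n + 4)) ^ c
          = X 2 ^ (t' + 1) * (X 0 ^ ((2 * n + 2) * a) * X 1 ^ ((n + 2) * b) *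
            X 2 ^ ((2 * n + 4) * c - (t' + 1))) := by
        rw [← pow_mul, ← pow_mul, ← pow_mul]
        conv_lhs => rw [← ecz]
        rw [pow_add]; ring
      rw [heq]
      exact Ideal.mul_mem_right _ _ hz'
    · push_neg at hcase
      obtain ⟨i, hit, hd1, hd2⟩ := arith_exists' n (t' + 1) a b c hmt habc hcase
      apply Ideal.mem_sup_left
      have hx : (X 0 ^ (2 * n + 3) : MvPolynomial (Fin 3) k) ∈
          Ideal.span {(X 0 : MvPolynomial (Fin 3) k) ^ (2 * n + 3), X 1 ^ (2 * n + 3)} :=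
        Ideal.subset_span (Set.mem_insert _ _)
      have hy : (X 1 ^ (2 * n + 3) : MvPolynomial (Fin 3) k) ∈
          Ideal.span {(X 0 : MvPolynomial (Fin 3) k) ^ (2 * n + 3), X 1 ^ (2 * n + 3)} :=
        Ideal.subset_span (by simp)
      have hxy := Ideal.mul_mem_mul (Ideal.pow_mem_pow hx i)
        (Ideal.pow_mem_pow hy ((t' + 1) - i))
      rw [← pow_add, Nat.add_sub_cancel' hit, ← pow_mul, ← pow_mul] at hxy
      have ex : (2 * n + 3) * i + ((2 * n + 2) * a - (2 * n + 3) * i) = (2 * n + 2) * a :=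
        Nat.add_sub_cancel' hd1
      have ey : (2 * n + 3) * ((t' + 1) - i) +
          ((n + 2) * b - (2 * n + 3) * ((t' + 1) - i)) = (n + 2) * b :=
        Nat.add_sub_cancel' hd2
      have heq : (X 0 ^ (2 * n + 2) : MvPolynomial (Fin 3) k) ^ a * (X 1 ^ (n + 2)) ^ b *
          (X 2 ^ (2 * n + 4)) ^ c
          = (X 0 ^ ((2 * n + 3) * i) * X 1 ^ ((2 * n + 3) * ((t' + 1) - i))) *
            (X 0 ^ ((2 * n + 2) * a - (2 * n + 3) * i) *
             X 1 ^ ((n + 2) * b - (2 * n + 3) * ((t' + 1) - i)) *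
             X 2 ^ ((2 * n + 4) * c)) := by
        rw [← pow_mul, ← pow_mul, ← pow_mul]
        conv_lhs => rw [← ex, ← ey]
        rw [pow_add, pow_add]; ring
      rw [heq]
      exact Ideal.mul_mem_right _ _ hxy
end

section
/- Let $m \ge 1$ be an integer and consider the monomial ideals $M = (x^{2m}, y^{2m}, x y^{m-1} z, z^{2m})^2$, $P = (x^m, y^m)$, and $Q = (z^{2m+2})$ in $k[x,y,z]$. Then $M^t \subseteq P^t + Q^t$ if and only if $t = m$. -/
open MvPolynomial Pointwise

lemma pow2_decomp {R : Type*} [CommSemiring R] (g1 g2 : R) :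
    ∀ (n : ℕ) (p : R), p ∈ (({g1, g2} : Set R) ^ n) →
      ∃ i j, i + j = n ∧ p = g1 ^ i * g2 ^ j := by
  intro n
  induction n with
  | zero =>
    intro p hp
    rw [pow_zero, Set.mem_one] at hp
    exact ⟨0, 0, rfl, by simp [hp]⟩
  | succ n ih =>
    intro p hp
    rw [pow_succ] at hp
    obtain ⟨q, hq, r, hr, rfl⟩ := Set.mem_mul.mp hp
    obtain ⟨i, j, hij, rfl⟩ := ih q hq
    simp only [Set.mem_insert_iff, Set.mem_singleton_iff] at hr
    rcases hr with rfl | rfl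
    · exact ⟨i + 1, j, by omega, by ring⟩
    · exact ⟨i, j + 1, by omega, by ring⟩

lemma pow4_decomp {R : Type*} [CommSemiring R] (g1 g2 g3 g4 : R) :
    ∀ (n : ℕ) (p : R), p ∈ (({g1, g2, g3, g4} : Set R) ^ n) →
      ∃ a b c d, a + b + c + d = n ∧ p = g1 ^ a * g2 ^ b * g3 ^ c * g4 ^ d := by
  intro n
  induction n with
  | zero =>
    intro p hp
    rw [pow_zero, Set.mem_one] at hp
    exact ⟨0, 0, 0, 0, rfl, by simp [hp]⟩
  | succ n ih =>
    intro p hp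
    rw [pow_succ] at hp
    obtain ⟨q, hq, r, hr, rfl⟩ := Set.mem_mul.mp hp
    obtain ⟨a, b, c, d, hs, rfl⟩ := ih q hq
    simp only [Set.mem_insert_iff, Set.mem_singleton_iff] at hr
    rcases hr with rfl | rfl | rfl | rfl
    · exact ⟨a + 1, b, c, d, by omega, by ring⟩
    · exact ⟨a, b + 1, c, d, by omega, by ring⟩
    · exact ⟨a, b, c + 1, d, by omega, by ring⟩
    · exact ⟨a, b, c, d + 1, by omega, by ring⟩

lemma combo (m a b c d : ℕ) (hm : 1 ≤ m) (h : a + b + c + d = 2 * m) :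
    (∃ i j, i + j = m ∧ i * m ≤ 2 * a * m + c ∧ j * m ≤ 2 * b * m + c * (m - 1)) ∨
      (2 * m + 2) * m ≤ c + 2 * d * m := by
  by_cases hd : m + 1 ≤ d
  · right
    calc (2 * m + 2) * m = 2 * (m + 1) * m := by ring
    _ ≤ 2 * d * m := Nat.mul_le_mul_right _ (by omega)
    _ ≤ c + 2 * d * m := Nat.le_add_left _ _
  · left
    have hq : m * (c / m) + c % m = c := Nat.div_add_mod c m
    have hr' : c % m < m := Nat.mod_lt _ hm
    have hcm : c * (m - 1) + c = c * m := by
      cases m with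
      | zero => omega
      | succ m' => simp only [Nat.succ_sub_one]; ring
    have key : m * m + c % m ≤ 2 * (a * m) + 2 * (b * m) + c * m := by
      rcases le_or_gt (m + 1) (2 * a + 2 * b + c) with hs | hs
      · have h1 : (m + 1) * m ≤ (2 * a + 2 * b + c) * m := Nat.mul_le_mul_right _ hs
        have e1 : (m + 1) * m = m * m + m := by ring
        have e2 : (2 * a + 2 * b + c) * m = 2 * (a * m) + 2 * (b * m) + c * m := by ring
        linarith
      · have ha : a = 0 := by omega
        have hb : b = 0 := by omega
        have hc : c = m := by omega
        subst ha hb hc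
        simp [Nat.mod_self]
    refine ⟨min m (2 * a + c / m), m - min m (2 * a + c / m), by omega, ?_, ?_⟩
    · calc min m (2 * a + c / m) * m ≤ (2 * a + c / m) * m :=
          Nat.mul_le_mul_right _ (min_le_right _ _)
      _ = 2 * a * m + m * (c / m) := by ring
      _ ≤ 2 * a * m + c := by omega
    · rw [Nat.sub_mul, Nat.sub_le_iff_le_add]
      rcases le_or_gt m (2 * a + c / m) with hge | hlt
      · rw [min_eq_left hge]
        exact Nat.le_add_left _ _
      · rw [min_eq_right hlt.le]
        have e3 : (2 * a + c / m) * m = 2 * (a * m) + m * (c / m) := by ring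
        have e4 : 2 * b * m = 2 * (b * m) := by ring
        linarith

lemma key_notmem {k : Type*} [Field k] (m t c d : ℕ) (hm : 1 ≤ m)
    (hPb : ∀ i j : ℕ, i + j = t → m * i ≤ c → m * j ≤ (m - 1) * c → False)
    (hQb : ¬ ((2 * m + 2) * t ≤ c + 2 * m * d)) :
    (X 0 * X 1 ^ (m - 1) * X 2 : MvPolynomial (Fin 3) k) ^ c * (X 2 ^ (2 * m)) ^ d ∉
      (Ideal.span {(X 0 : MvPolynomial (Fin 3) k) ^ m, X 1 ^ m}) ^ t +
        (Ideal.span {(X 2 : MvPolynomial (Fin 3) k) ^ (2 * m + 2)}) ^ t := by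
  intro hw
  set D : Set (Fin 3 →₀ ℕ) := {ν | (∃ i j, i + j = t ∧
      ν = Finsupp.single 0 (m * i) + Finsupp.single 1 (m * j)) ∨
      ν = Finsupp.single 2 ((2 * m + 2) * t)} with hD
  have hle2 : (Ideal.span {(X 0 : MvPolynomial (Fin 3) k) ^ m, X 1 ^ m}) ^ t +
      (Ideal.span {(X 2 : MvPolynomial (Fin 3) k) ^ (2 * m + 2)}) ^ t ≤
      Ideal.span ((fun s => monomial s (1 : k)) '' D) := by
    apply sup_le
    · rw [show (Ideal.span {(X 0 : MvPolynomial (Fin 3) k) ^ m, X 1 ^ m}) ^ t =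
          Ideal.span (({(X 0 : MvPolynomial (Fin 3) k) ^ m, X 1 ^ m} : Set _) ^ t) from
          Submodule.span_pow _ t]
      apply Ideal.span_le.mpr
      intro p hp
      obtain ⟨i, j, hij, rfl⟩ := pow2_decomp _ _ t p hp
      have : ((X 0 : MvPolynomial (Fin 3) k) ^ m) ^ i * (X 1 ^ m) ^ j =
          monomial (Finsupp.single 0 (m * i) + Finsupp.single 1 (m * j)) (1 : k) := by
        rw [← pow_mul, ← pow_mul]
        simp only [X_pow_eq_monomial, monomial_mul, one_mul]
      rw [this]
      exact Ideal.subset_span ⟨_, Or.inl ⟨i, j, hij, rfl⟩, rfl⟩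
    · rw [Ideal.span_singleton_pow]
      apply Ideal.span_le.mpr
      intro p hp
      simp only [Set.mem_singleton_iff] at hp
      subst hp
      have : ((X 2 : MvPolynomial (Fin 3) k) ^ (2 * m + 2)) ^ t =
          monomial (Finsupp.single 2 ((2 * m + 2) * t)) (1 : k) := by
        rw [← pow_mul, X_pow_eq_monomial]
      rw [this]
      exact Ideal.subset_span ⟨_, Or.inr rfl, rfl⟩
  have hw' := hle2 hw
  have hwm : (X 0 * X 1 ^ (m - 1) * X 2 : MvPolynomial (Fin 3) k) ^ c * (X 2 ^ (2 * m)) ^ d =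
      monomial (Finsupp.single 0 c + Finsupp.single 1 ((m - 1) * c) +
        Finsupp.single 2 (c + 2 * m * d)) (1 : k) := by
    have h : (X 0 * X 1 ^ (m - 1) * X 2 : MvPolynomial (Fin 3) k) ^ c * (X 2 ^ (2 * m)) ^ d =
        X 0 ^ c * X 1 ^ ((m - 1) * c) * X 2 ^ (c + 2 * m * d) := by ring
    rw [h]
    simp only [X_pow_eq_monomial, monomial_mul, one_mul]
  rw [hwm, mem_ideal_span_monomial_image] at hw'
  obtain ⟨ν, hν, hle3⟩ := hw' _ (by
    classical
    rw [support_monomial, if_neg one_ne_zero]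
    exact Finset.mem_singleton_self _)
  rw [hD] at hν
  rcases hν with ⟨i, j, hij, rfl⟩ | rfl
  · have h0 := Finsupp.le_def.mp hle3 0
    have h1 := Finsupp.le_def.mp hle3 1
    simp only [Finsupp.add_apply, Finsupp.single_apply] at h0 h1
    simp at h0 h1
    exact hPb i j hij h0 h1
  · have h2 := Finsupp.le_def.mp hle3 2
    simp only [Finsupp.add_apply, Finsupp.single_apply] at h2
    simp at h2
    exact hQb h2

/-- **Lemma for type B symbolic depth functions.**  In `k[x,y,z]` with
`M = (x^{2m}, y^{2m}, x y^{m-1} z, z^{2m})^2`, `P = (x^m, y^m)` and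
`Q = (z^{2m+2})`, one has `M^t ⊆ P^t + Q^t` if and only if `t = m`. -/
theorem stmt6 {k : Type*} [Field k] (m t : ℕ) (hm : 1 ≤ m) (ht : 1 ≤ t)
    (M P Q : Ideal (MvPolynomial (Fin 3) k))
    (hM : M = (Ideal.span {(X 0 : MvPolynomial (Fin 3) k) ^ (2*m),
      X 1 ^ (2*m), X 0 * X 1 ^ (m-1) * X 2, X 2 ^ (2*m)}) ^ 2)
    (hP : P = Ideal.span {(X 0 : MvPolynomial (Fin 3) k) ^ m, X 1 ^ m})
    (hQ : Q = Ideal.span {(X 2 : MvPolynomial (Fin 3) k) ^ (2*m+2)}) :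
    M ^ t ≤ P ^ t + Q ^ t ↔ t = m := by
  subst hM hP hQ
  set S : Set (MvPolynomial (Fin 3) k) := {(X 0 : MvPolynomial (Fin 3) k) ^ (2*m),
      X 1 ^ (2*m), X 0 * X 1 ^ (m-1) * X 2, X 2 ^ (2*m)} with hS
  constructor
  · intro hle
    by_contra hne
    have hg3 : (X 0 * X 1 ^ (m-1) * X 2 : MvPolynomial (Fin 3) k) ∈ Ideal.span S :=
      Ideal.subset_span (by simp [hS])
    have hg4 : ((X 2 : MvPolynomial (Fin 3) k) ^ (2*m)) ∈ Ideal.span S :=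
      Ideal.subset_span (by simp [hS])
    have hmem : ∀ c d : ℕ, c + d = 2 * t →
        (X 0 * X 1 ^ (m-1) * X 2 : MvPolynomial (Fin 3) k) ^ c * (X 2 ^ (2*m)) ^ d ∈
          ((Ideal.span S) ^ 2) ^ t := by
      intro c d hcd
      have := Submodule.mul_mem_mul (Ideal.pow_mem_pow hg3 c) (Ideal.pow_mem_pow hg4 d)
      rw [← pow_add, hcd] at this
      rwa [pow_mul (Ideal.span S) 2 t] at this
    by_cases hdv : m ∣ t
    · obtain ⟨u, rfl⟩ := hdv
      have hu0 : u ≠ 0 := by rintro rfl; simp at ht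
      have hu1 : u ≠ 1 := by rintro rfl; simp at hne
      have h2m : 2 * m ≤ m * u := by
        calc 2 * m = m * 2 := by ring
        _ ≤ m * u := Nat.mul_le_mul_left _ (by omega)
      obtain ⟨c, hc⟩ : ∃ c, m * u = c + 1 := ⟨m * u - 1, by omega⟩
      refine key_notmem m (m * u) c (c + 2) hm ?_ ?_ (hle (hmem c (c + 2) (by omega)))
      · intro i j hij h1 h2
        rw [hc] at hij
        have e1 : m * i + m * j = m * (c + 1) := by rw [← Nat.mul_add, hij]
        have e2 : (m - 1) * c + c = m * c := by
          cases m with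
          | zero => omega
          | succ m' => simp only [Nat.succ_sub_one]; ring
        have e3 : m * (c + 1) = m * c + m := by ring
        linarith
      · intro h
        rw [hc] at h
        have e3 : (2 * m + 2) * (c + 1) = 2 * (m * c) + 2 * m + 2 * c + 2 := by ring
        have e4 : 2 * m * (c + 2) = 2 * (m * c) + 4 * m := by ring
        have h2m' : 2 * m ≤ c + 1 := hc ▸ h2m
        linarith
    · refine key_notmem m t t t hm ?_ ?_ (hle (hmem t t (by omega)))
      · intro i j hij h1 h2
        have e1 : m * i + m * j = m * t := by rw [← Nat.mul_add, hij]
        have e2 : (m - 1) * t + t = m * t := by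
          cases m with
          | zero => omega
          | succ m' => simp only [Nat.succ_sub_one]; ring
        have : m * i = t := le_antisymm h1 (by linarith)
        exact hdv ⟨i, this.symm⟩
      · intro h
        have e3 : (2 * m + 2) * t = 2 * (m * t) + 2 * t := by ring
        have e4 : 2 * m * t = 2 * (m * t) := by ring
        linarith
  · intro h
    rw [h, ← pow_mul]
    rw [show (Ideal.span S) ^ (2 * m) = Ideal.span (S ^ (2 * m)) from Submodule.span_pow _ _]
    apply Ideal.span_le.mpr
    intro p hp
    obtain ⟨a, b, c, d, hsum, rfl⟩ := pow4_decomp _ _ _ _ (2 * m) p hp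
    have hform : ((X 0 : MvPolynomial (Fin 3) k) ^ (2*m)) ^ a * (X 1 ^ (2*m)) ^ b *
        (X 0 * X 1 ^ (m-1) * X 2) ^ c * (X 2 ^ (2*m)) ^ d =
        X 0 ^ (2*a*m + c) * X 1 ^ (2*b*m + c*(m-1)) * X 2 ^ (c + 2*d*m) := by ring
    rcases combo m a b c d hm hsum with ⟨i, j, hij, hx, hy⟩ | hz
    · apply Submodule.mem_sup_left
      have hx0 : ((X 0 : MvPolynomial (Fin 3) k) ^ m) ∈
          Ideal.span {(X 0 : MvPolynomial (Fin 3) k) ^ m, X 1 ^ m} :=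
        Ideal.subset_span (by simp)
      have hy0 : ((X 1 : MvPolynomial (Fin 3) k) ^ m) ∈
          Ideal.span {(X 0 : MvPolynomial (Fin 3) k) ^ m, X 1 ^ m} :=
        Ideal.subset_span (by simp)
      have hgen : ((X 0 : MvPolynomial (Fin 3) k) ^ m) ^ i * (X 1 ^ m) ^ j ∈
          (Ideal.span {(X 0 : MvPolynomial (Fin 3) k) ^ m, X 1 ^ m}) ^ m := by
        have := Submodule.mul_mem_mul (Ideal.pow_mem_pow hx0 i) (Ideal.pow_mem_pow hy0 j)
        rwa [← pow_add, hij] at this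
      refine Ideal.mem_of_dvd _ ?_ hgen
      rw [hform, ← pow_mul, ← pow_mul]
      apply Dvd.dvd.mul_right
      exact mul_dvd_mul (pow_dvd_pow _ (by rw [Nat.mul_comm]; exact hx))
        (pow_dvd_pow _ (by rw [Nat.mul_comm]; exact hy))
    · apply Submodule.mem_sup_right
      rw [Ideal.span_singleton_pow, Ideal.mem_span_singleton, hform, ← pow_mul]
      exact Dvd.dvd.mul_left (pow_dvd_pow _ hz) _
end

section
/- Let $m \ge 2$ be an integer and consider the monomial ideals $M = (x^{2m-2}, y^m, z^m)^2$, $P = (x^{2m-1}, y^{2m-1})$, and $Q = (z)$ in $k[x,y,z]$. Then $M^t \subseteq P^t + Q^t$ if and only if $t$ is divisible by $m$. -/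
open MvPolynomial

namespace Stmt7Aux

variable {k : Type*} [Field k]

/-- iterated pointwise set addition -/
def addPow (S : Set (Fin 3 →₀ ℕ)) : ℕ → Set (Fin 3 →₀ ℕ)
  | 0 => {0}
  | n+1 => {e | ∃ u ∈ addPow S n, ∃ v ∈ S, e = u + v}

lemma span_image_pow (S : Set (Fin 3 →₀ ℕ)) (n : ℕ) :
    (Ideal.span ((fun s => monomial s (1:k)) '' S)) ^ n
      = Ideal.span ((fun s => monomial s (1:k)) '' addPow S n) := by
  induction n with
  | zero =>
      rw [pow_zero, Ideal.one_eq_top, addPow, Set.image_singleton]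
      simp [Ideal.span_singleton_one]
  | succ n ih =>
      rw [pow_succ, ih, Ideal.span_mul_span']
      congr 1
      ext p
      constructor
      · rintro ⟨x, ⟨u, hu, rfl⟩, y, ⟨v, hv, rfl⟩, rfl⟩
        exact ⟨u + v, ⟨u, hu, v, hv, rfl⟩, by simp [monomial_mul]⟩
      · rintro ⟨e, ⟨u, hu, v, hv, rfl⟩, rfl⟩
        exact ⟨monomial u 1, ⟨u, hu, rfl⟩, monomial v 1, ⟨v, hv, rfl⟩, by simp [monomial_mul]⟩

lemma mem_span_mono (S : Set (Fin 3 →₀ ℕ)) (e : Fin 3 →₀ ℕ) :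
    (monomial e (1:k)) ∈ Ideal.span ((fun s => monomial s (1:k)) '' S) ↔ ∃ s ∈ S, s ≤ e := by
  rw [mem_ideal_span_monomial_image]
  simp [support_monomial, (one_ne_zero : (1:k) ≠ 0)]

lemma addPow_triple (u v w : Fin 3 →₀ ℕ) (N : ℕ) (e : Fin 3 →₀ ℕ) :
    e ∈ addPow {u, v, w} N ↔ ∃ a b c : ℕ, a + b + c = N ∧ e = a • u + b • v + c • w := by
  induction N generalizing e with
  | zero =>
      constructor
      · rintro rfl
        exact ⟨0, 0, 0, rfl, by simp⟩
      · rintro ⟨a, b, c, habc, rfl⟩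
        obtain ⟨rfl, rfl, rfl⟩ : a = 0 ∧ b = 0 ∧ c = 0 := by omega
        simp [addPow]
  | succ N ih =>
      constructor
      · rintro ⟨x, hx, y, hy, rfl⟩
        obtain ⟨a, b, c, habc, rfl⟩ := ih x |>.mp hx
        rcases hy with rfl | rfl | rfl
        · exact ⟨a+1, b, c, by omega, by rw [succ_nsmul]; abel⟩
        · exact ⟨a, b+1, c, by omega, by rw [succ_nsmul]; abel⟩
        · exact ⟨a, b, c+1, by omega, by rw [succ_nsmul]; abel⟩
      · rintro ⟨a, b, c, habc, rfl⟩
        rcases a with _ | a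
        · rcases b with _ | b
          · rcases c with _ | c
            · omega
            · exact ⟨0 • u + 0 • v + c • w, (ih _).mpr ⟨0, 0, c, by omega, rfl⟩, w,
                by simp, by rw [succ_nsmul]; abel⟩
          · exact ⟨0 • u + b • v + c • w, (ih _).mpr ⟨0, b, c, by omega, rfl⟩, v,
              by simp, by rw [succ_nsmul]; abel⟩
        · exact ⟨a • u + b • v + c • w, (ih _).mpr ⟨a, b, c, by omega, rfl⟩, u,
            by simp, by rw [succ_nsmul]; abel⟩

lemma addPow_pair (u v : Fin 3 →₀ ℕ) (N : ℕ) (e : Fin 3 →₀ ℕ) :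
    e ∈ addPow {u, v} N ↔ ∃ a b : ℕ, a + b = N ∧ e = a • u + b • v := by
  induction N generalizing e with
  | zero =>
      constructor
      · rintro rfl
        exact ⟨0, 0, rfl, by simp⟩
      · rintro ⟨a, b, hab, rfl⟩
        obtain ⟨rfl, rfl⟩ : a = 0 ∧ b = 0 := by omega
        simp [addPow]
  | succ N ih =>
      constructor
      · rintro ⟨x, hx, y, hy, rfl⟩
        obtain ⟨a, b, hab, rfl⟩ := ih x |>.mp hx
        rcases hy with rfl | rfl
        · exact ⟨a+1, b, by omega, by rw [succ_nsmul]; abel⟩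
        · exact ⟨a, b+1, by omega, by rw [succ_nsmul]; abel⟩
      · rintro ⟨a, b, hab, rfl⟩
        rcases a with _ | a
        · rcases b with _ | b
          · omega
          · exact ⟨0 • u + b • v, (ih _).mpr ⟨0, b, by omega, rfl⟩, v,
              by simp, by rw [succ_nsmul]; abel⟩
        · exact ⟨a • u + b • v, (ih _).mpr ⟨a, b, by omega, rfl⟩, u,
            by simp, by rw [succ_nsmul]; abel⟩

lemma add_div_le (a b n : ℕ) (hn : 0 < n) : a / n + b / n ≤ (a + b) / n := by
  rw [Nat.le_div_iff_mul_le hn, add_mul]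
  exact Nat.add_le_add (Nat.div_mul_le_self a n) (Nat.div_mul_le_self b n)

lemma le_mul_ceil (x n : ℕ) (hn : 0 < n) : x ≤ n * ((x + n - 1) / n) := by
  have h1 : x + n - 1 < n * ((x + n - 1) / n) + n := by
    have := Nat.div_add_mod (x + n - 1) n
    have := Nat.mod_lt (x + n - 1) hn
    omega
  omega

lemma lemA (m n c : ℕ) (hn : 0 < n) (hmn : m + 1 ≤ n) :
    c / n + (m * c + n - 1) / n ≤ c := by
  have h1 : c / n + (m * c + n - 1) / n ≤ (c + (m * c + n - 1)) / n := add_div_le _ _ _ hn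
  have h2 : (c + (m * c + n - 1)) / n ≤ c := by
    rw [Nat.div_le_iff_le_mul_add_pred hn]
    have : (m + 1) * c ≤ n * c := Nat.mul_le_mul_right c hmn
    have hnc : c + m * c = (m+1) * c := by ring
    omega
  omega

lemma mainL (m s a b : ℕ) (hm : 2 ≤ m)
    (hab : (2*m-1) * s + 1 ≤ a + b) :
    m * s ≤ (2*m-2) * a / (2*m-1) + m * b / (2*m-1) := by
  set n := 2*m-1 with hn
  have hn0 : 0 < n := by omega
  rcases Nat.eq_zero_or_pos a with rfl | ha
  · have hb : n * s + 1 ≤ b := by omega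
    have : m * s ≤ m * b / n := by
      rw [Nat.le_div_iff_mul_le hn0]
      calc m * s * n = m * (n * s) := by ring
        _ ≤ m * b := Nat.mul_le_mul_left m (by omega)
    exact le_trans this (Nat.le_add_left _ _)
  · obtain ⟨c, rfl⟩ : ∃ c, a = c + 1 := ⟨a - 1, by omega⟩
    by_cases hc : n * s ≤ c
    · have : m * s ≤ (2*m-2) * (c+1) / n := by
        rw [Nat.le_div_iff_mul_le hn0]
        calc m * s * n = (m * n) * s := by ring
          _ ≤ ((2*m-2) * n) * s := Nat.mul_le_mul_right s (Nat.mul_le_mul_right n (by omega))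
          _ = (2*m-2) * (n * s) := by ring
          _ ≤ (2*m-2) * (c + 1) := Nat.mul_le_mul_left _ (by omega)
      exact le_trans this (Nat.le_add_right _ _)
    · push_neg at hc
      have hb : n * s - c ≤ b := by omega
      set u := (m * c + n - 1) / n with hu
      have hums : u ≤ m * s := by
        rw [hu, Nat.div_le_iff_le_mul_add_pred hn0]
        have h3 : m * c ≤ m * (n * s) := Nat.mul_le_mul_left m (by omega)
        have h4 : m * (n * s) = n * (m * s) := by ring
        omega
      have hmcnu : m * c ≤ n * u := le_mul_ceil (m * c) n hn0
      have hstep2 : m * s - u ≤ m * b / n := by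
        rw [Nat.le_div_iff_mul_le hn0]
        have h5 : m * (n * s - c) ≤ m * b := Nat.mul_le_mul_left m hb
        have h6 : m * (n * s - c) + m * c = m * (n * s) := by
          rw [← Nat.mul_add]; congr 1; omega
        have h7 : (m * s - u) * n + u * n = (m*s) * n := by
          rw [← Nat.add_mul]; congr 1; omega
        have h8 : (m*s) * n = m * (n * s) := by ring
        have h9 : u * n = n * u := by ring
        omega
      have hstep3 : c - c / n ≤ (2*m-2) * (c+1) / n := by
        rw [Nat.le_div_iff_mul_le hn0, Nat.sub_mul]
        have h10 : c < n * (c / n) + n := by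
          have := Nat.div_add_mod c n
          have := Nat.mod_lt c hn0
          omega
        have h11 : (2*m-2) * (c+1) = (n-1) * (c+1) := by
          have : 2*m-2 = n-1 := by omega
          rw [this]
        have h12 : (n-1) * (c+1) + (c + 1) = n * (c + 1) := by
          rw [← Nat.add_one_mul]; congr 1; omega
        have h13 : n * (c+1) = c * n + n := by ring
        have h14 : (c/n) * n = n * (c/n) := by ring
        omega
      have hA : c / n + u ≤ c := lemA m n c hn0 (by omega)
      omega

end Stmt7Aux

open Stmt7Aux in
/-- **Lemma for periodic symbolic depth functions (case `d = 0`).**  In `k[x,y,z]`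
with `M = (x^{2m-2}, y^m, z^m)^2`, `P = (x^{2m-1}, y^{2m-1})` and `Q = (z)`,
one has `M^t ⊆ P^t + Q^t` if and only if `m` divides `t`. -/
theorem stmt7 {k : Type*} [Field k] (m t : ℕ) (hm : 2 ≤ m) (ht : 1 ≤ t)
    (M P Q : Ideal (MvPolynomial (Fin 3) k))
    (hM : M = (Ideal.span {(X 0 : MvPolynomial (Fin 3) k) ^ (2*m-2),
      X 1 ^ m, X 2 ^ m}) ^ 2)
    (hP : P = Ideal.span {(X 0 : MvPolynomial (Fin 3) k) ^ (2*m-1), X 1 ^ (2*m-1)})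
    (hQ : Q = Ideal.span {(X 2 : MvPolynomial (Fin 3) k)}) :
    M ^ t ≤ P ^ t + Q ^ t ↔ m ∣ t := by
  classical
  set Sgen : Set (Fin 3 →₀ ℕ) :=
    {Finsupp.single 0 (2*m-2), Finsupp.single 1 m, Finsupp.single 2 m} with hSgen
  set Pgen : Set (Fin 3 →₀ ℕ) :=
    {Finsupp.single 0 (2*m-1), Finsupp.single 1 (2*m-1)} with hPgen
  have hMeq : M ^ t
      = Ideal.span ((fun s => monomial s (1:k)) '' addPow Sgen (2*t)) := by
    rw [hM, ← pow_mul, ← span_image_pow]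
    congr 2
    rw [hSgen, Set.image_insert_eq, Set.image_insert_eq, Set.image_singleton]
    simp [X_pow_eq_monomial]
  have hPQeq : P ^ t + Q ^ t
      = Ideal.span ((fun s => monomial s (1:k)) ''
          (addPow Pgen t ∪ {Finsupp.single 2 t})) := by
    rw [Set.image_union, Ideal.span_union, Submodule.add_eq_sup]
    congr 1
    · rw [hP, ← span_image_pow]
      congr 2
      rw [hPgen, Set.image_insert_eq, Set.image_singleton]
      simp [X_pow_eq_monomial]
    · rw [hQ, Ideal.span_singleton_pow, Set.image_singleton, X_pow_eq_monomial]
  rw [hMeq, hPQeq]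
  constructor
  · -- inclusion → m ∣ t
    intro h
    by_contra hnd
    set c := t / m with hc
    set r := t % m with hr
    have hr0 : r ≠ 0 := fun h0 => hnd (Nat.dvd_of_mod_eq_zero h0)
    have hrm : r < m := Nat.mod_lt t (by omega)
    have htc : m * c + r = t := Nat.div_add_mod t m
    have hct : c ≤ t := Nat.div_le_self t m
    set b := 2*t - c - 1 with hb
    have habc : 1 + b + c = 2*t := by omega
    set ew : Fin 3 →₀ ℕ :=
      1 • Finsupp.single 0 (2*m-2) + b • Finsupp.single 1 m + c • Finsupp.single 2 m with hew
    have hewMem : ew ∈ addPow Sgen (2*t) :=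
      (addPow_triple _ _ _ _ _).mpr ⟨1, b, c, habc, rfl⟩
    have hmem : (monomial ew (1:k)) ∈
        Ideal.span ((fun s => monomial s (1:k)) '' addPow Sgen (2*t)) :=
      Ideal.subset_span ⟨ew, hewMem, rfl⟩
    have := (mem_span_mono _ _).mp (h hmem)
    obtain ⟨sg, hsg, hle⟩ := this
    rw [Finsupp.le_def] at hle
    rcases hsg with hsg | hsg
    · -- sg comes from P^t : contradiction
      obtain ⟨i, j, hij, rfl⟩ := (addPow_pair _ _ _ _).mp hsg
      have h0 := hle 0
      have h1 := hle 1
      simp [hew, Finsupp.smul_single, Finsupp.single_apply] at h0 h1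
      -- h0 : i * (2*m-1) ≤ 2*m-2  forces i = 0
      have hi0 : i = 0 := by
        by_contra hi
        have : 2*m-1 ≤ i * (2*m-1) := Nat.le_mul_of_pos_left _ (by omega)
        omega
      subst hi0
      have hjt : j = t := by omega
      rw [hjt] at h1
      -- h1 : t * (2*m-1) ≤ b * m : contradiction
      have e1 : m * b + m * (c+1) = 2 * (m * t) := by
        have hbc : b + (c+1) = 2*t := by omega
        calc m*b + m*(c+1) = m*(b+(c+1)) := by ring
          _ = m*(2*t) := by rw [hbc]
          _ = 2*(m*t) := by ring
      have e2 : t * (2*m-1) + t = 2 * (m*t) := by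
        have h2m : 2*m-1+1 = 2*m := by omega
        calc t * (2*m-1) + t = t * ((2*m-1)+1) := by ring
          _ = t * (2*m) := by rw [h2m]
          _ = 2 * (m*t) := by ring
      have e3 : m * (c+1) = m*c + m := by ring
      have e4 : b * m = m * b := by ring
      omega
    · -- sg = single 2 t : contradiction
      rw [Set.mem_singleton_iff] at hsg
      subst hsg
      have h2 := hle 2
      simp [hew, Finsupp.smul_single, Finsupp.single_apply] at h2
      -- h2 : t ≤ c * m
      have : c * m = m * c := by ring
      omega
  · -- m ∣ t → inclusion
    rintro ⟨s, rfl⟩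
    rw [Ideal.span_le]
    rintro p ⟨e, he, rfl⟩
    obtain ⟨a, b, c, habc, rfl⟩ := (addPow_triple _ _ _ _ _).mp he
    rw [SetLike.mem_coe, mem_span_mono]
    by_cases hzc : m * s ≤ m * c
    · -- use z^t
      refine ⟨Finsupp.single 2 (m*s), Or.inr rfl, ?_⟩
      rw [Finsupp.le_def]
      intro j
      have hcm : c * m = m * c := by ring
      fin_cases j <;>
        simp [Finsupp.smul_single, Finsupp.single_apply] <;> omega
    · push_neg at hzc
      have hcs : c < s := by
        exact Nat.lt_of_mul_lt_mul_left hzc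
      have hab : (2*m-1) * s + 1 ≤ a + b := by
        have e5 : (2*m-1) * s + s = 2 * (m * s) := by
          have h2m : 2*m-1+1 = 2*m := by omega
          calc (2*m-1)*s + s = ((2*m-1)+1)*s := by ring
            _ = (2*m)*s := by rw [h2m]
            _ = 2*(m*s) := by ring
        omega
      have hmain := mainL m s a b hm hab
      set f := (2*m-2) * a / (2*m-1) with hf
      set g := m * b / (2*m-1) with hg
      set i := min (m*s) f with hi
      refine ⟨i • Finsupp.single 0 (2*m-1) + (m*s - i) • Finsupp.single 1 (2*m-1),
        Or.inl ((addPow_pair _ _ _ _).mpr ⟨i, m*s - i, by omega, rfl⟩), ?_⟩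
      rw [Finsupp.le_def]
      intro j
      have hnf : f * (2*m-1) ≤ (2*m-2) * a := Nat.div_mul_le_self _ _
      have hng : g * (2*m-1) ≤ m * b := Nat.div_mul_le_self _ _
      have key : (m*s - i) * (2*m-1) ≤ b * m := by
        by_cases hft : m*s ≤ f
        · have : i = m*s := by omega
          simp [this]
        · have hif : i = f := by omega
          have htf : m*s - f ≤ g := by omega
          calc (m*s - i) * (2*m-1) ≤ g * (2*m-1) := by
                apply Nat.mul_le_mul_right
                omega
            _ ≤ m * b := hng
            _ = b * m := by ring
      have keyx : i * (2*m-1) ≤ a * (2*m-2) := by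
        calc i * (2*m-1) ≤ f * (2*m-1) := Nat.mul_le_mul_right _ (by omega)
          _ ≤ (2*m-2) * a := hnf
          _ = a * (2*m-2) := by ring
      fin_cases j <;> simp [Finsupp.smul_single, Finsupp.single_apply] <;> omega
end

section
/- Let $m \ge 4$ and $d \ge 2$ be integers with $\sqrt{m/2} \le d \le m/2$. Consider the monomial ideals $M = (x^{2m+1-d}, y^{m+2d-1}, z^{m+2d-1}, x y^{m-1} z)^2$, $P = (x^{2m}, y^{2m})$, and $Q = (z^2)$ in $k[x,y,z]$. Then $M^t \subseteq P^t + Q^t$ if and only if $t \equiv d \pmod{m}$. -/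
set_option maxHeartbeats 1000000 in
lemma keyLe (m d t a b c e : ℕ) (hm : 4 ≤ m) (hd : 2 ≤ d) (hd1 : m ≤ 2 * d ^ 2)
    (hd2 : 2 * d ≤ m) (hmod : t % m = d) (hsum : a + b + c + e = 2 * t)
    (hC : (m + 2 * d - 1) * c + e < 2 * t) :
    ∃ i ≤ t, 2 * m * i ≤ (2 * m + 1 - d) * a + e ∧
      2 * m * (t - i) ≤ (m + 2 * d - 1) * b + (m - 1) * e := by
  have hdm : d < m := by omega
  obtain ⟨q, hq⟩ : ∃ q, q = t / m := ⟨_, rfl⟩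
  have htq : m * q + d = t := by rw [hq, ← hmod]; exact Nat.div_add_mod t m
  have hab : (m + 2 * d - 2) * c + 1 ≤ a + b := by
    have h1 : (m + 2*d - 1) = (m + 2*d - 2) + 1 := by omega
    rw [h1, add_mul, one_mul] at hC
    linarith only [hC, hsum]
  have htZ : (t : ℤ) = m * q + d := by exact_mod_cast htq.symm
  have hsumZ : (a : ℤ) + b + c + e = 2 * t := by exact_mod_cast hsum
  have habZ : ((m : ℤ) + 2*d - 2) * c + 1 ≤ a + b := by
    have h2 := hab
    zify [show 2 ≤ m + 2*d by omega] at h2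
    linarith only [h2]
  have hmZ : (4:ℤ) ≤ m := by exact_mod_cast hm
  have hdZ : (2:ℤ) ≤ d := by exact_mod_cast hd
  have hd1Z : (m:ℤ) ≤ 2 * d^2 := by exact_mod_cast hd1
  have hd2Z : (2:ℤ) * d ≤ m := by exact_mod_cast hd2
  by_cases hAt : 2 * m * t ≤ (2 * m + 1 - d) * a + e
  · exact ⟨t, le_refl t, hAt, by simp⟩
  push_neg at hAt
  have hAtZ : ((2:ℤ) * m + 1 - d) * a + e < 2 * m * t := by
    have h2 := hAt; zify [show d ≤ 2*m+1 by omega] at h2; linarith only [h2]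
  by_cases hcase : d * a + b + c ≤ 2 * d
  -- ===== Case 1 : d*a + b + c ≤ 2d =====
  · have hcZ : (d:ℤ) * a + b + c ≤ 2 * d := by exact_mod_cast hcase
    have hc0 : c = 0 := by
      rcases Nat.eq_zero_or_pos c with h0 | h1
      · exact h0
      exfalso
      have hc1Z : (1:ℤ) ≤ c := by exact_mod_cast h1
      have f1 : ((m:ℤ) + 2*d - 2) * 1 ≤ ((m:ℤ) + 2*d - 2) * c :=
        mul_le_mul_of_nonneg_left hc1Z (by linarith only [hmZ, hdZ])
      have f2 : (0:ℤ) ≤ (d - 1) * a :=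
        mul_nonneg (by linarith only [hdZ]) (by positivity)
      linarith only [f1, f2, habZ, hcZ, hmZ, hdZ]
    subst hc0
    have hqt : q + a ≤ t := by
      have h6 : q ≤ m * q := Nat.le_mul_of_pos_left q (by omega)
      have ha2 : a ≤ 2 := by
        by_contra hcon
        push_neg at hcon
        have f1 : d * 3 ≤ d * a := Nat.mul_le_mul_left d hcon
        linarith only [f1, hcase, hd]
      linarith only [h6, ha2, htq, hd]
    refine ⟨q + a, hqt, ?_, ?_⟩
    · zify [show d ≤ 2*m+1 by omega]
      linarith only [htZ, hsumZ, hcZ]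
    · have hfact : (2:ℤ)*d ≤ (m+1) * a + 2*d*b := by
        rcases a with _ | a2
        · have hb1 : 1 ≤ b := by simpa using hab
          have hb1Z : (1:ℤ) ≤ b := by exact_mod_cast hb1
          have f1 : (2:ℤ)*d*1 ≤ 2*d*b :=
            mul_le_mul_of_nonneg_left hb1Z (by linarith only [hdZ])
          push_cast
          linarith only [f1]
        · have ha1Z : (1:ℤ) ≤ (a2:ℤ) + 1 := by
            have := Int.natCast_nonneg a2
            linarith only [this]
          have f1 : ((m:ℤ)+1)*1 ≤ (m+1)*((a2:ℤ)+1) :=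
            mul_le_mul_of_nonneg_left ha1Z (by linarith only [hmZ])
          have f2 : (0:ℤ) ≤ 2*d*b := by positivity
          push_cast
          linarith only [f1, f2, hd2Z]
      zify [hqt, show 1 ≤ m by omega, show 1 ≤ m + 2*d by omega]
      have h1 : (m:ℤ)*e = 2*((m:ℤ)*t) - m*a - m*b := by linear_combination (m:ℤ) * hsumZ
      linarith only [h1, htZ, hsumZ, hfact]
  -- ===== Case 2 : d*a + b + c > 2d =====
  · push_neg at hcase
    obtain ⟨s, hsdef⟩ : ∃ s, s = d * a + b + c - 2 * d := ⟨_, rfl⟩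
    have hs1 : 1 ≤ s := by omega
    have hsZ : (s:ℤ) = d*a + b + c - 2*d := by
      rw [hsdef]; zify [le_of_lt hcase]
    have hs1Z : (1:ℤ) ≤ s := by exact_mod_cast hs1
    obtain ⟨j, hj⟩ : ∃ j, j = s / (2*m) := ⟨_, rfl⟩
    obtain ⟨u, hu⟩ : ∃ u, u = s % (2*m) := ⟨_, rfl⟩
    have hju : 2*m*j + u = s := by rw [hj, hu]; exact Nat.div_add_mod s (2*m)
    have hum : u < 2*m := by rw [hu]; exact Nat.mod_lt _ (by omega)
    have hjuZ : (2:ℤ)*m*j + u = s := by exact_mod_cast hju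
    obtain ⟨k, hk⟩ : ∃ k, k = if u = 0 then j else j + 1 := ⟨_, rfl⟩
    have hksZ : (u = 0 ∧ (2:ℤ)*m*k = s) ∨ (1 ≤ u ∧ (2:ℤ)*m*k = s - u + 2*m) := by
      rcases Nat.eq_zero_or_pos u with h0 | h1
      · left
        refine ⟨h0, ?_⟩
        rw [hk, if_pos h0]
        rw [h0] at hjuZ
        push_cast at hjuZ
        linarith only [hjuZ]
      · right
        refine ⟨h1, ?_⟩
        rw [hk, if_neg (by omega)]
        push_cast
        have h1Z : (1:ℤ) ≤ u := by exact_mod_cast h1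
        linarith only [hjuZ]
    have hkb1Z : (s:ℤ) ≤ 2*m*k := by
      rcases hksZ with ⟨h0, hks⟩ | ⟨h1, hks⟩
      · linarith only [hks]
      · have h1Z : (1:ℤ) ≤ u := by exact_mod_cast h1
        have humZ : (u:ℤ) < 2*m := by exact_mod_cast hum
        linarith only [hks, humZ]
    -- key identity : A + s = 2m(a+q)
    have hAs : ((2:ℤ)*m + 1 - d)*a + e + s = 2*m*(a+q) := by
      rw [hsZ]; linarith only [hsumZ, htZ]
    have hA0 : (0:ℤ) ≤ ((2:ℤ)*m + 1 - d)*a + e := by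
      have f1 : (0:ℤ) ≤ (2*(m:ℤ)+1-d)*a :=
        mul_nonneg (by linarith only [hd2Z, hdZ]) (by positivity)
      have f2 : (0:ℤ) ≤ e := by positivity
      linarith only [f1, f2]
    have hkaq : k ≤ a + q := by
      by_contra hcon
      push_neg at hcon
      have hconZ : (a:ℤ) + q + 1 ≤ k := by exact_mod_cast hcon
      have f1 : (2:ℤ)*m*((a:ℤ)+q+1) ≤ 2*m*k :=
        mul_le_mul_of_nonneg_left hconZ (by linarith only [hmZ])
      rcases hksZ with ⟨h0, hks⟩ | ⟨h1, hks⟩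
      · linarith only [f1, hks, hAs, hA0, hmZ]
      · have h1Z : (1:ℤ) ≤ u := by exact_mod_cast h1
        linarith only [f1, hks, hjuZ, hAs, hA0, h1Z, hmZ]
    have hkaqZ : ((a + q - k : ℕ) : ℤ) = (a:ℤ) + q - k := by zify [hkaq]
    have hG2 : 2 * m * (a + q - k) ≤ (2 * m + 1 - d) * a + e := by
      zify [hkaq, show d ≤ 2*m+1 by omega]
      linarith only [hAs, hkb1Z]
    have hG2Z : (2:ℤ) * m * ((a:ℤ) + q - k) ≤ ((2:ℤ)*m + 1 - d)*a + e := by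
      have h2 := hG2
      zify [hkaq, show d ≤ 2*m+1 by omega] at h2
      exact h2
    have hit : a + q - k ≤ t := by
      by_contra hcon
      push_neg at hcon
      have hconZ : (t:ℤ) + 1 ≤ ((a + q - k : ℕ) : ℤ) := by exact_mod_cast hcon
      rw [hkaqZ] at hconZ
      have f1 : (2:ℤ)*m*((t:ℤ)+1) ≤ 2*m*((a:ℤ)+q-k) :=
        mul_le_mul_of_nonneg_left hconZ (by linarith only [hmZ])
      linarith only [f1, hG2Z, hAtZ, hmZ]
    refine ⟨a + q - k, hit, hG2, ?_⟩
    -- remaining goal : 2m(t - (a+q-k)) ≤ (m+2d-1)b + (m-1)e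
    have hreqZ : (2:ℤ)*m*k + m*c ≤ s + (2*d-1)*b + (m+1-d)*a := by
      have f3b : (3:ℤ) ≤ 2*d - 1 := by linarith only [hdZ]
      have f3a : (3:ℤ) ≤ (m:ℤ)+1-d := by linarith only [hd2Z, hdZ]
      have fb : (3:ℤ)*b ≤ (2*d-1)*b :=
        mul_le_mul_of_nonneg_right f3b (by positivity)
      have fa : (3:ℤ)*a ≤ ((m:ℤ)+1-d)*a :=
        mul_le_mul_of_nonneg_right f3a (by positivity)
      rcases hksZ with ⟨h0, hks⟩ | ⟨h1, hks⟩
      -- u = 0 : need m*c ≤ (2d-1)b + (m+1-d)a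
      · rcases Nat.eq_zero_or_pos c with hc0 | hc1
        · subst hc0
          have g1 : (0:ℤ) ≤ (2*d-1)*b := mul_nonneg (by linarith only [hdZ]) (by positivity)
          have g2 : (0:ℤ) ≤ ((m:ℤ)+1-d)*a := mul_nonneg (by linarith only [f3a]) (by positivity)
          push_cast
          linarith only [hks, g1, g2]
        · have hc1Z : (1:ℤ) ≤ c := by exact_mod_cast hc1
          have g3 : (0:ℤ) ≤ (2*(m:ℤ)+6*d-6)*c :=
            mul_nonneg (by linarith only [hmZ, hdZ]) (by positivity)
          linarith only [hks, fb, fa, habZ, g3]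
      -- u ≥ 1 : need m*c + 2m ≤ u + (2d-1)b + (m+1-d)a
      · have h1Z : (1:ℤ) ≤ u := by exact_mod_cast h1
        rcases Nat.eq_zero_or_pos c with hc0 | hc1
        · subst hc0
          -- need : 2m ≤ u + (2d-1)b + (m+1-d)a , with s = d*a + b - 2d
          rcases Nat.eq_zero_or_pos j with hj0 | hj1
          -- j = 0 : u = s
          · have hus : (u:ℤ) = s := by
              rw [hj0] at hjuZ; push_cast at hjuZ; linarith only [hjuZ]
            rcases a with _ | a'
            · -- a = 0 : b ≥ 2d + 1
              have hbZ : 2*(d:ℤ) + 1 ≤ b := by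
                push_cast at hsZ; linarith only [hsZ, hs1Z]
              have g1 : (2:ℤ)*d*(2*d+1) ≤ 2*d*b :=
                mul_le_mul_of_nonneg_left hbZ (by linarith only [hdZ])
              push_cast
              push_cast at hsZ
              linarith only [hks, hus, hsZ, g1, hd1Z]
            · rcases a' with _ | a''
              · -- a = 1 : b ≥ d + 1
                have hbZ : (d:ℤ) + 1 ≤ b := by
                  push_cast at hsZ; linarith only [hsZ, hs1Z]
                have g1 : (2:ℤ)*d*((d:ℤ)+1) ≤ 2*d*b :=
                  mul_le_mul_of_nonneg_left hbZ (by linarith only [hdZ])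
                push_cast
                push_cast at hsZ
                linarith only [hks, hus, hsZ, g1, hd1Z, hmZ]
              · -- a ≥ 2
                rcases Nat.eq_zero_or_pos b with hb0 | hb1
                · -- b = 0 : then a ≥ 3
                  subst hb0
                  push_cast at hsZ
                  have ha3Z : (3:ℤ) ≤ (a'':ℤ) + 1 + 1 := by
                    rcases Nat.eq_zero_or_pos a'' with h00 | h01
                    · subst h00; push_cast at hsZ; linarith only [hsZ, hs1Z]
                    · have h01Z : (1:ℤ) ≤ a'' := by exact_mod_cast h01
                      linarith only [h01Z]
                  have g1 : ((m:ℤ)+1)*3 ≤ ((m:ℤ)+1)*((a'':ℤ)+1+1) :=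
                    mul_le_mul_of_nonneg_left ha3Z (by linarith only [hmZ])
                  push_cast
                  linarith only [hks, hus, hsZ, g1, hd2Z]
                · -- b ≥ 1
                  have hb1Z : (1:ℤ) ≤ b := by exact_mod_cast hb1
                  have ha2Z : (2:ℤ) ≤ (a'':ℤ) + 1 + 1 := by
                    have := Int.natCast_nonneg a''
                    linarith only [this]
                  have g1 : ((m:ℤ)+1)*2 ≤ ((m:ℤ)+1)*((a'':ℤ)+1+1) :=
                    mul_le_mul_of_nonneg_left ha2Z (by linarith only [hmZ])
                  have g2 : (2:ℤ)*d*1 ≤ 2*d*b :=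
                    mul_le_mul_of_nonneg_left hb1Z (by linarith only [hdZ])
                  push_cast
                  push_cast at hsZ
                  linarith only [hks, hus, hsZ, g1, g2, hdZ]
          -- j ≥ 1
          · have hj1Z : (1:ℤ) ≤ j := by exact_mod_cast hj1
            have f0 : (2:ℤ)*m*1 ≤ 2*m*j :=
              mul_le_mul_of_nonneg_left hj1Z (by linarith only [hmZ])
            have f1 : (0:ℤ) ≤ (2*(d:ℤ)-2)*b :=
              mul_nonneg (by linarith only [hdZ]) (by positivity)
            have f2 : (0:ℤ) ≤ ((m:ℤ)+1-2*d)*a :=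
              mul_nonneg (by linarith only [hd2Z]) (by positivity)
            push_cast
            push_cast at hsZ
            linarith only [hks, hjuZ, f0, f1, f2, hsZ, hdZ, h1Z]
        -- c ≥ 1
        · have hc1Z : (1:ℤ) ≤ c := by exact_mod_cast hc1
          have f4 : (2:ℤ)*m*1 ≤ 2*m*c :=
            mul_le_mul_of_nonneg_left hc1Z (by linarith only [hmZ])
          have f5 : (0:ℤ) ≤ (6*(d:ℤ)-6)*c :=
            mul_nonneg (by linarith only [hdZ]) (by positivity)
          linarith only [hks, fb, fa, habZ, f4, f5, h1Z]
    zify [hit, hkaq, show 1 ≤ m by omega, show 1 ≤ m + 2*d by omega]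
    have h1 : (m:ℤ)*e = 2*((m:ℤ)*t) - m*a - m*b - m*c := by
      linear_combination (m:ℤ) * hsumZ
    linarith only [h1, htZ, hsumZ, hsZ, hreqZ]

set_option maxHeartbeats 1000000 in
lemma keyW (m d t q r a b e : ℕ) (hm : 4 ≤ m) (hd : 2 ≤ d) (hdm : d ≤ m) (htq : m * q + r = t)
    (hr : r < m) (hsum : a + b + e = 2 * t)
    (hcond : (2*r < d*a + b ∧ (m+1)*a + 2*d*b < 2*m + 2*r) ∨
             (d*a + b ≤ 2*r ∧ (m+1)*a + 2*d*b < 2*r)) :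
    ∀ i ≤ t, ¬(2*m*i ≤ (2*m+1-d)*a + e ∧
      2*m*(t-i) ≤ (m+2*d-1)*b + (m-1)*e) := by
  intro i hi hcontra
  obtain ⟨hA, hB⟩ := hcontra
  have hmZ : (4:ℤ) ≤ m := by exact_mod_cast hm
  have hdZ : (2:ℤ) ≤ d := by exact_mod_cast hd
  have htqZ : ((m:ℤ)) * q + r = t := by exact_mod_cast htq
  have hrZ : (r:ℤ) < m := by exact_mod_cast hr
  have hsumZ : (a:ℤ) + b + e = 2*t := by exact_mod_cast hsum
  zify [hi, show d ≤ 2*m+1 by omega, show 1 ≤ m by omega,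
    show 1 ≤ m + 2*d by omega] at hA hB
  rcases hcond with ⟨h1, h2⟩ | ⟨h1, h2⟩
  · have h1Z : 2*(r:ℤ) < (d:ℤ)*a + b := by exact_mod_cast h1
    have h2Z : ((m:ℤ)+1)*a + 2*(d:ℤ)*b < 2*m + 2*r := by exact_mod_cast h2
    have hi1 : (i:ℤ) + 1 ≤ (a:ℤ) + q := by
      by_contra hcon
      push_neg at hcon
      have f : (2:ℤ)*m*((a:ℤ)+q) ≤ 2*m*i :=
        mul_le_mul_of_nonneg_left (by linarith only [hcon]) (by linarith only [hmZ])
      linarith only [f, hA, htqZ, h1Z, hsumZ]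
    have hme : (m:ℤ)*e = 2*((m:ℤ)*t) - m*a - m*b := by
      linear_combination (m:ℤ)*hsumZ
    have f2 : (2:ℤ)*m*((t:ℤ) - a - q + 1) ≤ 2*m*((t:ℤ) - i) :=
      mul_le_mul_of_nonneg_left (by linarith only [hi1]) (by linarith only [hmZ])
    linarith only [f2, hB, htqZ, h2Z, hsumZ, hme]
  · have h1Z : (d:ℤ)*a + b ≤ 2*(r:ℤ) := by exact_mod_cast h1
    have h2Z : ((m:ℤ)+1)*a + 2*(d:ℤ)*b < 2*(r:ℤ) := by exact_mod_cast h2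
    have hi1 : (i:ℤ) ≤ (a:ℤ) + q := by
      by_contra hcon
      push_neg at hcon
      have f : (2:ℤ)*m*((a:ℤ)+q+1) ≤ 2*m*i :=
        mul_le_mul_of_nonneg_left (by linarith only [hcon]) (by linarith only [hmZ])
      have g1 : (0:ℤ) ≤ (d:ℤ)*a := by positivity
      have g2 : (0:ℤ) ≤ (b:ℤ) := by positivity
      linarith only [f, hA, htqZ, hrZ, g1, g2, hsumZ]
    have hme : (m:ℤ)*e = 2*((m:ℤ)*t) - m*a - m*b := by
      linear_combination (m:ℤ)*hsumZ
    have f2 : (2:ℤ)*m*((t:ℤ) - a - q) ≤ 2*m*((t:ℤ) - i) :=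
      mul_le_mul_of_nonneg_left (by linarith only [hi1]) (by linarith only [hmZ])
    linarith only [f2, hB, htqZ, h2Z, hsumZ, hme]

lemma keyNe (m d t : ℕ) (hm : 4 ≤ m) (hd : 2 ≤ d) (hd1 : m ≤ 2 * d ^ 2)
    (hd2 : 2 * d ≤ m) (ht : 1 ≤ t) (hmod : t % m ≠ d) :
    ∃ a b e : ℕ, 1 ≤ a + b ∧ a + b + e = 2 * t ∧ ∀ i ≤ t,
      ¬(2*m*i ≤ (2*m+1-d)*a + e ∧
        2*m*(t-i) ≤ (m+2*d-1)*b + (m-1)*e) := by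
  obtain ⟨q, hq⟩ : ∃ q, q = t / m := ⟨_, rfl⟩
  obtain ⟨r, hrdef⟩ : ∃ r, r = t % m := ⟨_, rfl⟩
  have htq : m * q + r = t := by rw [hq, hrdef]; exact Nat.div_add_mod t m
  have hr : r < m := by rw [hrdef]; exact Nat.mod_lt _ (by omega)
  have hrd : r ≠ d := by rw [hrdef]; exact hmod
  rcases Nat.lt_or_ge d r with hcase | hcase
  · -- r > d : witness (0,1), second branch
    exact ⟨0, 1, 2*t - 1, by omega, by omega, keyW m d t q r 0 1 (2*t-1) hm hd (by omega) htq hr (by omega)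
      (Or.inr ⟨by omega, by omega⟩)⟩
  · -- r ≤ d, r ≠ d so r < d
    have hrd' : r < d := by omega
    rcases Nat.eq_zero_or_pos r with hr0 | hr1
    · -- r = 0 : witness (0,1), first branch
      exact ⟨0, 1, 2*t - 1, by omega, by omega, keyW m d t q r 0 1 (2*t-1) hm hd (by omega) htq hr (by omega)
        (Or.inl ⟨by omega, by omega⟩)⟩
    rcases Nat.lt_or_ge r 2 with hr2 | hr2
    · -- r = 1
      have hr1' : r = 1 := by omega
      rcases Nat.lt_or_ge d 3 with hd3 | hd3
      · -- d = 2 : witness (1,1)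
        exact ⟨1, 1, 2*t - 2, by omega, by omega, keyW m d t q r 1 1 (2*t-2) hm hd (by omega) htq hr (by omega)
          (Or.inl ⟨by omega, by omega⟩)⟩
      · -- d ≥ 3 : witness (1,0)
        exact ⟨1, 0, 2*t - 1, by omega, by omega, keyW m d t q r 1 0 (2*t-1) hm hd (by omega) htq hr (by omega)
          (Or.inl ⟨by omega, by omega⟩)⟩
    · -- 2 ≤ r < d : witness (2,0)
      exact ⟨2, 0, 2*t - 2, by omega, by omega, keyW m d t q r 2 0 (2*t-2) hm hd (by omega) htq hr (by omega)
        (Or.inl ⟨by omega, by omega⟩)⟩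
open MvPolynomial Pointwise

-- test ring identities with symbolic exponents
example {R : Type*} [CommRing R] (x y z : R) (n p q a b e : ℕ) :
    (x^n)^a * (y^p)^b * (x * y^q * z)^e = x^(n*a+e) * y^(p*b + q*e) * z^e := by
  ring

noncomputable def fm {k : Type*} [Field k] : (Fin 3 →₀ ℕ) → MvPolynomial (Fin 3) k :=
  fun s => monomial s 1

noncomputable def vec (p q r : ℕ) : Fin 3 →₀ ℕ :=
  Finsupp.single 0 p + Finsupp.single 1 q + Finsupp.single 2 r

lemma vec_apply0 (p q r : ℕ) : vec p q r 0 = p := by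
  simp [vec, Finsupp.single_apply]
lemma vec_apply1 (p q r : ℕ) : vec p q r 1 = q := by
  simp [vec, Finsupp.single_apply]
lemma vec_apply2 (p q r : ℕ) : vec p q r 2 = r := by
  simp [vec, Finsupp.single_apply]

lemma xyz_eq {k : Type*} [Field k] (p q r : ℕ) :
    (X 0 : MvPolynomial (Fin 3) k)^p * X 1^q * X 2^r = monomial (vec p q r) 1 := by
  simp [X_pow_eq_monomial, monomial_mul, vec]

lemma span_pow_le_four {R : Type*} [CommRing R] (x1 x2 x3 x4 : R) (N : ℕ) :
    Ideal.span {x1, x2, x3, x4} ^ N ≤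
      Ideal.span {p | ∃ a b c e : ℕ, a + b + c + e = N ∧ p = x1^a * x2^b * x3^c * x4^e} := by
  induction N with
  | zero =>
    rw [pow_zero, Ideal.one_eq_top]
    have h1 : (1:R) ∈ Ideal.span {p | ∃ a b c e : ℕ, a + b + c + e = 0 ∧
        p = x1^a * x2^b * x3^c * x4^e} :=
      Ideal.subset_span ⟨0, 0, 0, 0, rfl, by ring⟩
    rw [← Ideal.eq_top_iff_one] at h1
    rw [h1]
  | succ n ih =>
    rw [pow_succ]
    calc Ideal.span {x1,x2,x3,x4} ^ n * Ideal.span {x1,x2,x3,x4}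
        ≤ Ideal.span {p | ∃ a b c e : ℕ, a + b + c + e = n ∧ p = x1^a * x2^b * x3^c * x4^e} *
          Ideal.span {x1,x2,x3,x4} := Ideal.mul_mono_left ih
      _ = Ideal.span ({p | ∃ a b c e : ℕ, a + b + c + e = n ∧ p = x1^a * x2^b * x3^c * x4^e} *
          {x1,x2,x3,x4}) := by rw [Ideal.span_mul_span']
      _ ≤ _ := Ideal.span_mono ?_
    rintro w ⟨y, ⟨a, b, c, e, hsum, rfl⟩, z, hz, rfl⟩
    simp only [Set.mem_insert_iff, Set.mem_singleton_iff] at hz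
    rcases hz with rfl | rfl | rfl | rfl
    · exact ⟨a+1, b, c, e, by omega, by ring⟩
    · exact ⟨a, b+1, c, e, by omega, by ring⟩
    · exact ⟨a, b, c+1, e, by omega, by ring⟩
    · exact ⟨a, b, c, e+1, by omega, by ring⟩

lemma span_pow_le_two {R : Type*} [CommRing R] (x1 x2 : R) (N : ℕ) :
    Ideal.span {x1, x2} ^ N ≤
      Ideal.span {p | ∃ i j : ℕ, i + j = N ∧ p = x1^i * x2^j} := by
  induction N with
  | zero =>
    rw [pow_zero, Ideal.one_eq_top]
    have h1 : (1:R) ∈ Ideal.span {p | ∃ i j : ℕ, i + j = 0 ∧ p = x1^i * x2^j} :=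
      Ideal.subset_span ⟨0, 0, rfl, by ring⟩
    rw [← Ideal.eq_top_iff_one] at h1
    rw [h1]
  | succ n ih =>
    rw [pow_succ]
    calc Ideal.span {x1,x2} ^ n * Ideal.span {x1,x2}
        ≤ Ideal.span {p | ∃ i j : ℕ, i + j = n ∧ p = x1^i * x2^j} *
          Ideal.span {x1,x2} := Ideal.mul_mono_left ih
      _ = Ideal.span ({p | ∃ i j : ℕ, i + j = n ∧ p = x1^i * x2^j} * {x1,x2}) := by
          rw [Ideal.span_mul_span']
      _ ≤ _ := Ideal.span_mono ?_
    rintro w ⟨y, ⟨i, j, hsum, rfl⟩, z, hz, rfl⟩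
    simp only [Set.mem_insert_iff, Set.mem_singleton_iff] at hz
    rcases hz with rfl | rfl
    · exact ⟨i+1, j, by omega, by ring⟩
    · exact ⟨i, j+1, by omega, by ring⟩


/-- **Lemma for periodic symbolic depth functions (general residue `d`).**
Let `m ≥ 4` and `d ≥ 2` with `√(m/2) ≤ d ≤ m/2` (i.e. `m ≤ 2d²` and `2d ≤ m`).
In `k[x,y,z]` with `M = (x^{2m+1-d}, y^{m+2d-1}, z^{m+2d-1}, x y^{m-1} z)^2`,
`P = (x^{2m}, y^{2m})` and `Q = (z^2)`, one has `M^t ⊆ P^t + Q^t` if and only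
if `t ≡ d (mod m)`. -/
theorem stmt8 {k : Type*} [Field k] (m d t : ℕ) (hm : 4 ≤ m) (hd : 2 ≤ d)
    (hd1 : m ≤ 2 * d ^ 2) (hd2 : 2 * d ≤ m) (ht : 1 ≤ t)
    (M P Q : Ideal (MvPolynomial (Fin 3) k))
    (hM : M = (Ideal.span {(X 0 : MvPolynomial (Fin 3) k) ^ (2*m+1-d),
      X 1 ^ (m+2*d-1), X 2 ^ (m+2*d-1), X 0 * X 1 ^ (m-1) * X 2}) ^ 2)
    (hP : P = Ideal.span {(X 0 : MvPolynomial (Fin 3) k) ^ (2*m), X 1 ^ (2*m)})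
    (hQ : Q = Ideal.span {(X 2 : MvPolynomial (Fin 3) k) ^ 2}) :
    M ^ t ≤ P ^ t + Q ^ t ↔ t ≡ d [MOD m] := by
  have hdm : d < m := by omega
  subst hM hP hQ
  constructor
  · -- forward direction
    intro hle
    show t % m = d % m
    rw [Nat.mod_eq_of_lt hdm]
    by_contra hmod
    obtain ⟨a, b, e, hab1, hsum, hfail⟩ := keyNe m d t hm hd hd1 hd2 ht hmod
    have hg1J : (X 0 ^ (2*m+1-d) : MvPolynomial (Fin 3) k) ∈
        Ideal.span {(X 0 : MvPolynomial (Fin 3) k) ^ (2*m+1-d),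
          X 1 ^ (m+2*d-1), X 2 ^ (m+2*d-1), X 0 * X 1 ^ (m-1) * X 2} :=
      Ideal.subset_span (by simp)
    have hg2J : (X 1 ^ (m+2*d-1) : MvPolynomial (Fin 3) k) ∈
        Ideal.span {(X 0 : MvPolynomial (Fin 3) k) ^ (2*m+1-d),
          X 1 ^ (m+2*d-1), X 2 ^ (m+2*d-1), X 0 * X 1 ^ (m-1) * X 2} :=
      Ideal.subset_span (by simp)
    have hg4J : (X 0 * X 1 ^ (m-1) * X 2 : MvPolynomial (Fin 3) k) ∈
        Ideal.span {(X 0 : MvPolynomial (Fin 3) k) ^ (2*m+1-d),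
          X 1 ^ (m+2*d-1), X 2 ^ (m+2*d-1), X 0 * X 1 ^ (m-1) * X 2} :=
      Ideal.subset_span (by simp)
    have hμM : (X 0 : MvPolynomial (Fin 3) k) ^ ((2*m+1-d)*a + e)
        * X 1 ^ ((m+2*d-1)*b + (m-1)*e) * X 2 ^ e ∈
        (Ideal.span {(X 0 : MvPolynomial (Fin 3) k) ^ (2*m+1-d),
          X 1 ^ (m+2*d-1), X 2 ^ (m+2*d-1), X 0 * X 1 ^ (m-1) * X 2} ^ 2) ^ t := by
      rw [← pow_mul]
      have h124 := Ideal.mul_mem_mul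
        (Ideal.mul_mem_mul (Ideal.pow_mem_pow hg1J a) (Ideal.pow_mem_pow hg2J b))
        (Ideal.pow_mem_pow hg4J e)
      rw [← pow_add, ← pow_add, hsum] at h124
      have heq : ((X 0 : MvPolynomial (Fin 3) k) ^ (2*m+1-d))^a * (X 1 ^ (m+2*d-1))^b
          * (X 0 * X 1^(m-1) * X 2)^e
          = X 0 ^ ((2*m+1-d)*a + e) * X 1 ^ ((m+2*d-1)*b + (m-1)*e) * X 2 ^ e := by
        ring
      rw [← heq]
      exact h124
    have hμPQ := hle hμM
    have hPQle : Ideal.span {(X 0 : MvPolynomial (Fin 3) k)^(2*m), X 1^(2*m)} ^ t ⊔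
        Ideal.span {(X 2 : MvPolynomial (Fin 3) k)^2} ^ t ≤
        Ideal.span ((fun s => monomial s (1:k)) ''
          ({w | ∃ i j, i + j = t ∧ w = vec (2*m*i) (2*m*j) 0} ∪ {vec 0 0 (2*t)})) := by
      apply sup_le
      · refine le_trans (span_pow_le_two _ _ t) (Ideal.span_le.2 ?_)
        rintro p ⟨i, j, hij, rfl⟩
        refine Ideal.subset_span ⟨vec (2*m*i) (2*m*j) 0, Or.inl ⟨i, j, hij, rfl⟩, ?_⟩
        simp only
        rw [← xyz_eq]
        ring
      · rw [Ideal.span_singleton_pow]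
        refine Ideal.span_le.2 (Set.singleton_subset_iff.2 ?_)
        refine Ideal.subset_span ⟨vec 0 0 (2*t), Or.inr rfl, ?_⟩
        simp only
        rw [← xyz_eq]
        ring
    rw [Submodule.add_eq_sup] at hμPQ
    have hμ' := hPQle hμPQ
    rw [xyz_eq] at hμ'
    have hsupp := MvPolynomial.mem_ideal_span_monomial_image.mp hμ'
      (vec ((2*m+1-d)*a + e) ((m+2*d-1)*b + (m-1)*e) e)
      (by rw [mem_support_iff]; simp [coeff_monomial])
    obtain ⟨u, hu, hule⟩ := hsupp
    rcases hu with ⟨i, j, hij, rfl⟩ | rfl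
    · have c0 := Finsupp.le_def.mp hule 0
      have c1 := Finsupp.le_def.mp hule 1
      rw [vec_apply0, vec_apply0] at c0
      rw [vec_apply1, vec_apply1] at c1
      refine hfail i (by omega) ⟨c0, ?_⟩
      rw [show t - i = j by omega]
      exact c1
    · have c2 := Finsupp.le_def.mp hule 2
      rw [vec_apply2, vec_apply2] at c2
      omega
  · -- backward direction
    intro hmod
    have hmodd : t % m = d := by
      have h : t % m = d % m := hmod
      rwa [Nat.mod_eq_of_lt hdm] at h
    rw [← pow_mul]
    refine le_trans (span_pow_le_four _ _ _ _ (2*t)) (Ideal.span_le.2 ?_)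
    rintro p ⟨a, b, c, e, hsum, rfl⟩
    have hpeq : ((X 0 : MvPolynomial (Fin 3) k) ^ (2*m+1-d))^a * (X 1 ^ (m+2*d-1))^b *
        (X 2 ^ (m+2*d-1))^c * (X 0 * X 1 ^ (m-1) * X 2)^e
        = X 0 ^ ((2*m+1-d)*a + e) * X 1 ^ ((m+2*d-1)*b + (m-1)*e)
          * X 2 ^ ((m+2*d-1)*c + e) := by ring
    rw [hpeq]
    rw [Submodule.add_eq_sup]
    by_cases hzc : 2*t ≤ (m+2*d-1)*c + e
    · -- lies in Q^t
      have hzz : (X 2 : MvPolynomial (Fin 3) k)^2 ∈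
          Ideal.span {(X 2 : MvPolynomial (Fin 3) k)^2} := Ideal.subset_span rfl
      have h1 := Ideal.pow_mem_pow hzz t
      obtain ⟨C', hC'⟩ : ∃ C', C' = (m+2*d-1)*c + e - 2*t := ⟨_, rfl⟩
      have hCC : (m+2*d-1)*c + e = C' + 2*t := by
        rw [hC']; exact (Nat.sub_add_cancel hzc).symm
      have heq : (X 0 : MvPolynomial (Fin 3) k) ^ ((2*m+1-d)*a + e)
            * X 1 ^ ((m+2*d-1)*b + (m-1)*e) * X 2 ^ ((m+2*d-1)*c + e)
          = (X 0 ^ ((2*m+1-d)*a + e) * X 1 ^ ((m+2*d-1)*b + (m-1)*e) * X 2 ^ C')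
            * ((X 2)^2)^t := by
        rw [hCC]; ring
      rw [heq]
      exact Submodule.mem_sup_right (Ideal.mul_mem_left _ _ h1)
    · push_neg at hzc
      obtain ⟨i, hit, hxA, hyB⟩ := keyLe m d t a b c e hm hd hd1 hd2 hmodd hsum hzc
      have hx : (X 0 : MvPolynomial (Fin 3) k)^(2*m) ∈
          Ideal.span {(X 0 : MvPolynomial (Fin 3) k) ^ (2*m), X 1 ^ (2*m)} :=
        Ideal.subset_span (by simp)
      have hy : (X 1 : MvPolynomial (Fin 3) k)^(2*m) ∈
          Ideal.span {(X 0 : MvPolynomial (Fin 3) k) ^ (2*m), X 1 ^ (2*m)} :=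
        Ideal.subset_span (by simp)
      have h1 := Ideal.mul_mem_mul (Ideal.pow_mem_pow hx i) (Ideal.pow_mem_pow hy (t-i))
      rw [← pow_add, Nat.add_sub_cancel' hit] at h1
      obtain ⟨A', hA'⟩ : ∃ A', A' = (2*m+1-d)*a + e - 2*m*i := ⟨_, rfl⟩
      have hAA : (2*m+1-d)*a + e = A' + 2*m*i := by
        rw [hA']; exact (Nat.sub_add_cancel hxA).symm
      obtain ⟨B', hB'⟩ : ∃ B', B' = (m+2*d-1)*b + (m-1)*e - 2*m*(t-i) := ⟨_, rfl⟩
      have hBB : (m+2*d-1)*b + (m-1)*e = B' + 2*m*(t-i) := by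
        rw [hB']; exact (Nat.sub_add_cancel hyB).symm
      have heq : (X 0 : MvPolynomial (Fin 3) k) ^ ((2*m+1-d)*a + e)
            * X 1 ^ ((m+2*d-1)*b + (m-1)*e) * X 2 ^ ((m+2*d-1)*c + e)
          = (X 0 ^ A' * X 1 ^ B' * X 2 ^ ((m+2*d-1)*c + e))
            * ((X 0 ^ (2*m))^i * (X 1 ^ (2*m))^(t-i)) := by
        rw [hAA, hBB]; ring
      rw [heq]
      exact Submodule.mem_sup_left (Ideal.mul_mem_left _ _ h1)
end

section
/- Let $m \ge 2$ and $s \ge 1$, and suppose $t \le m - 1$. Then the system of conditions $0 \le \ell \le i \le 2t$, $\lfloor (2m-2)\ell/(2m-1) \rfloor + \lfloor m(i-\ell)/(2m-1) \rfloor < t$, and $2m(2t - i) < t$ has an integer solution $(\ell, i)$; whereas if $t \ge m$ the system has no integer solution. -/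
private lemma stmt9_aux (M T L D Q1 R1 Q2 R2 : ℤ) (hm : 2 ≤ M) (htm : M ≤ T)
    (hL : 0 ≤ L) (hD0 : 0 ≤ D)
    (H1 : (2*M-2)*L = (2*M-1)*Q1 + R1)
    (H2 : M*((2*T-D)-L) = (2*M-1)*Q2 + R2)
    (hr1 : 0 ≤ R1) (hr1' : R1 ≤ 2*M-2) (hr2 : 0 ≤ R2) (hr2' : R2 ≤ 2*M-2)
    (hq : Q1 + Q2 + 1 ≤ T) (hd : 2*M*D + 1 ≤ T)
    (he0 : L = 0 → R1 = 0) (he1 : L = 1 → R1 = 2*M-2) : False := by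
  have hub : (2*M-1)*(Q1+Q2) ≤ (2*M-1)*(T-1) :=
    mul_le_mul_of_nonneg_left (by linarith) (by linarith)
  have e : (2*M-1)*(Q1+Q2) + R1 + R2 = 2*M*T - M*D + (M-2)*L := by
    linear_combination (-1 : ℤ) * H1 - H2
  have KEY : T + 2*M - 1 + (M-2)*L ≤ M*D + R1 + R2 := by nlinarith
  rcases eq_or_lt_of_le hm with hm2 | hm3
  · subst hm2; linarith
  · rcases eq_or_lt_of_le hL with hL0 | hL1
    · rw [he0 hL0.symm] at KEY; rw [← hL0] at KEY; linarith
    · have hL1 : 1 ≤ L := hL1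
      rcases eq_or_lt_of_le hL1 with hLe1 | hL2
      · rw [he1 hLe1.symm, ← hLe1] at KEY
        have h3 : T ≤ M*D + M - 1 := by linarith
        have hT2 : T ≤ 2*M - 3 := by linarith
        rcases eq_or_lt_of_le hD0 with hDe0 | hD1
        · rw [← hDe0] at h3; linarith
        · have : M*1 ≤ M*D := mul_le_mul_of_nonneg_left hD1 (by linarith)
          linarith
      · have hL2 : 2 ≤ L := hL2
        have : (M-2)*2 ≤ (M-2)*L := mul_le_mul_of_nonneg_left hL2 (by linarith)
        linarith

/-- **Solvability of the diophantine system in the proof of Lemma 4.2.**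
Let `m ≥ 2`, `s ≥ 1`, `t ≥ 1`.  If `t ≤ m - 1` the system
`0 ≤ ℓ ≤ i ≤ 2t`, `⌊(2m-2)ℓ/(2m-1)⌋ + ⌊m(i-ℓ)/(2m-1)⌋ < t`, `2m(2t-i) < t`
has an integer solution `(ℓ, i)`, and if `t ≥ m` it has no solution. -/

theorem stmt9 (m s t : ℕ) (hm : 2 ≤ m) (hs : 1 ≤ s) (ht : 1 ≤ t) :
    (t ≤ m - 1 → ∃ ℓ i : ℕ, ℓ ≤ i ∧ i ≤ 2*t ∧
      ((2*m-2)*ℓ)/(2*m-1) + (m*(i-ℓ))/(2*m-1) < t ∧ 2*m*(2*t-i) < t) ∧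
    (m ≤ t → ¬ ∃ ℓ i : ℕ, ℓ ≤ i ∧ i ≤ 2*t ∧
      ((2*m-2)*ℓ)/(2*m-1) + (m*(i-ℓ))/(2*m-1) < t ∧ 2*m*(2*t-i) < t) := by
  have hN : 0 < 2*m-1 := by omega
  constructor
  · intro htm
    refine ⟨1, 2*t, by omega, le_refl _, ?_, ?_⟩
    · have e1 : (2*m-2)*1/(2*m-1) = 0 := Nat.div_eq_of_lt (by omega)
      have e2 : m*(2*t-1)/(2*m-1) < t := by
        rw [Nat.div_lt_iff_lt_mul hN]
        zify [show 1 ≤ 2*t by omega, show 1 ≤ 2*m by omega]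
        have : (t:ℤ) + 1 ≤ m := by exact_mod_cast (by omega : t + 1 ≤ m)
        nlinarith
      omega
    · have h0 : 2*t - 2*t = 0 := by omega
      rw [h0]; omega
  · rintro htm ⟨ℓ, i, hli, hi2t, hdiv, hlast⟩
    obtain ⟨q1, hq1d⟩ : ∃ q, ((2*m-2)*ℓ)/(2*m-1) = q := ⟨_, rfl⟩
    obtain ⟨r1, hr1d⟩ : ∃ r, ((2*m-2)*ℓ) % (2*m-1) = r := ⟨_, rfl⟩
    obtain ⟨q2, hq2d⟩ : ∃ q, (m*(i-ℓ))/(2*m-1) = q := ⟨_, rfl⟩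
    obtain ⟨r2, hr2d⟩ : ∃ r, (m*(i-ℓ)) % (2*m-1) = r := ⟨_, rfl⟩
    have h1 := Nat.div_add_mod ((2*m-2)*ℓ) (2*m-1)
    have h2 := Nat.div_add_mod (m*(i-ℓ)) (2*m-1)
    rw [hq1d, hr1d] at h1
    rw [hq2d, hr2d] at h2
    have hr1lt : r1 < 2*m-1 := hr1d ▸ Nat.mod_lt _ hN
    have hr2lt : r2 < 2*m-1 := hr2d ▸ Nat.mod_lt _ hN
    rw [hq1d, hq2d] at hdiv
    -- ℕ facts
    have F1 : (2*m-2)*ℓ = (2*m-1)*q1 + r1 := h1.symm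
    have F2 : m*(i-ℓ) = (2*m-1)*q2 + r2 := h2.symm
    have Fd : 2*m*(2*t-i) + 1 ≤ t := hlast
    -- cast
    zify [show 1 ≤ 2*m by omega, show 2 ≤ 2*m by omega] at F1
    zify [hli, show 1 ≤ 2*m by omega, show 2 ≤ 2*m by omega] at F2
    have Fi : (i:ℤ) = 2*(t:ℤ) - ((2*t-i : ℕ):ℤ) := by omega
    refine stmt9_aux (m:ℤ) (t:ℤ) (ℓ:ℤ) ((2*t-i : ℕ) : ℤ) (q1:ℤ) (r1:ℤ) (q2:ℤ) (r2:ℤ)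
      (by exact_mod_cast hm) (by exact_mod_cast htm)
      (Int.ofNat_nonneg _) (Int.ofNat_nonneg _)
      F1 (by linear_combination F2 - (m:ℤ)*Fi)
      (Int.ofNat_nonneg _)
      (by zify [show 2 ≤ 2*m by omega] at hr1lt; omega)
      (Int.ofNat_nonneg _)
      (by zify [show 2 ≤ 2*m by omega] at hr2lt; omega)
      (by exact_mod_cast (by omega : q1 + q2 + 1 ≤ t))
      (by exact_mod_cast Fd) ?_ ?_
    · intro h
      have h0 : ℓ = 0 := by exact_mod_cast h
      subst h0
      have : r1 = 0 := by
        rw [← hr1d]; simp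
      exact_mod_cast this
    · intro h
      have h0 : ℓ = 1 := by exact_mod_cast h
      subst h0
      have : r1 = 2*m-2 := by
        rw [← hr1d, mul_one]; exact Nat.mod_eq_of_lt (by omega)
      rw [this]
      push_cast [show 2 ≤ 2*m by omega]
      ring
end

section
/- Let $m \ge 2$ and let $t$ be a positive integer divisible by $m$. Then there is no pair of integers $(i,j)$ with $i, j \ge 0$, $i + j \le 2t$, $\lfloor (2m-2)i/(2m-1) \rfloor + \lfloor mj/(2m-1) \rfloor < t$, and $m(2t - i - j) < t$. -/
/-- **Unsolvability of the diophantine system when `m ∣ t`.**  For `m ≥ 2` and a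
positive integer `t` divisible by `m`, there is no pair `(i,j)` of non-negative
integers with `i + j ≤ 2t`, `⌊(2m-2)i/(2m-1)⌋ + ⌊mj/(2m-1)⌋ < t` and
`m(2t - i - j) < t`. -/
theorem stmt10 (m t : ℕ) (hm : 2 ≤ m) (ht : 1 ≤ t) (hdvd : m ∣ t) :
    ¬ ∃ i j : ℕ, i + j ≤ 2*t ∧
      ((2*m-2)*i)/(2*m-1) + (m*j)/(2*m-1) < t ∧ m*(2*t-i-j) < t := by
  rintro ⟨i, j, h1, h2, h3⟩
  obtain ⟨k, rfl⟩ := hdvd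
  obtain ⟨M, rfl⟩ : ∃ M, m = M + 2 := ⟨m - 2, by omega⟩
  clear hm
  have hk : 1 ≤ k := by nlinarith
  have hsub2 : 2*(M+2)-2 = 2*M+2 := by omega
  have hsub1 : 2*(M+2)-1 = 2*M+3 := by omega
  rw [hsub2, hsub1] at h2
  -- From h3: i + j ≥ k*(2M+3) + 1
  have hs : k*(2*M+3) + 1 ≤ i + j := by
    have h4 : 2*((M+2)*k) - i - j < k := by
      by_contra h
      push_neg at h
      have := Nat.mul_le_mul_left (M+2) h
      omega
    have e2 : k*(2*M+3) + k = 2*((M+2)*k) := by ring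
    omega
  rcases Nat.eq_zero_or_pos M with rfl | hM
  · -- m = 2
    simp only [Nat.zero_mul, Nat.mul_zero] at *
    omega
  · by_cases hab : ((M+2)*k+1)*(2*M+3) ≤ (2*M+2)*i + (M+2)*j
    · have h5 : (M+2)*k+1 ≤ ((2*M+2)*i + (M+2)*j)/(2*M+3) := by
        rw [Nat.le_div_iff_mul_le (by omega)]
        exact hab
      have h6 : ((2*M+2)*i + (M+2)*j)/(2*M+3)
          ≤ ((2*M+2)*i)/(2*M+3) + ((M+2)*j)/(2*M+3) + 1 := by
        rw [Nat.add_div (by omega : 0 < 2*M+3)]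
        split <;> omega
      omega
    · push_neg at hab
      have e : (2*M+2)*i + (M+2)*j = (M+2)*(i+j) + M*i := by ring
      have hmul : (M+2)*(k*(2*M+3)+1) ≤ (M+2)*(i+j) := Nat.mul_le_mul_left _ hs
      have hib : M*i ≤ M := by nlinarith
      have hi1 : i ≤ 1 := by
        by_contra h
        push_neg at h
        nlinarith
      have hj : k*(2*M+3) ≤ j := by omega
      have hjd : (M+2)*k ≤ ((M+2)*j)/(2*M+3) := by
        rw [Nat.le_div_iff_mul_le (by omega)]
        calc (M+2)*k*(2*M+3) = (M+2)*(k*(2*M+3)) := by ring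
          _ ≤ (M+2)*j := Nat.mul_le_mul_left _ hj
      exact absurd h2 (Nat.not_lt.mpr (le_trans hjd (Nat.le_add_left _ _)))
end

section
/- Let $s \ge 3$ and work in the polynomial ring $R = k[x_{i,j} : 1 \le i \le s, 1 \le j \le s-1]$. Let $P_i = (x_{i,1},\dots,x_{i,s-1})$ for $1 \le i \le s$ and $Q = (f_1,\dots,f_s)$ where $f_i = x_{i,1}\cdots x_{i,s-1}$. Then $Q^t \subseteq P_1^t + \cdots + P_s^t$ if and only if $t \notin E(s)$, where $E(s) = \bigcup_{i \ge 1}\{t : i(s-1)+1 \le t \le is\}$. -/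
open MvPolynomial Pointwise

section aux
variable {A : Type*} [CommRing A] {ι : Type*}

lemma aux_prod_pow_mem (I : Ideal A) (x : ι → A) (c : ι → ℕ) (S : Finset ι)
    (hx : ∀ i ∈ S, x i ∈ I) : (∏ i ∈ S, x i ^ c i) ∈ I ^ (∑ i ∈ S, c i) := by
  classical
  induction S using Finset.induction_on with
  | empty => simp [Ideal.one_eq_top]
  | @insert a S ha ih =>
    rw [Finset.prod_insert ha, Finset.sum_insert ha, pow_add]
    exact Ideal.mul_mem_mul (Ideal.pow_mem_pow (hx a (Finset.mem_insert_self a S)) _)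
      (ih fun i hi => hx i (Finset.mem_insert_of_mem hi))

lemma aux_prod_mem_pow (I : Ideal A) (x : ι → A) (S : Finset ι)
    (hx : ∀ i ∈ S, x i ∈ I) : (∏ i ∈ S, x i) ∈ I ^ S.card := by
  have := aux_prod_pow_mem I x (fun _ => 1) S hx
  simpa using this

end aux

lemma aux_prod_monomial {k : Type*} [CommSemiring k] {σ : Type*} {ι : Type*}
    (S : Finset ι) (d : ι → (σ →₀ ℕ)) :
    (∏ i ∈ S, (monomial (d i) (1 : k))) = monomial (∑ i ∈ S, d i) 1 := by
  classical
  induction S using Finset.induction_on with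
  | empty => simp
  | @insert a S ha ih => rw [Finset.prod_insert ha, Finset.sum_insert ha, ih, monomial_mul, one_mul]

def suppIdeal (k : Type*) [CommRing k] (σ : Type*) (Pr : (σ →₀ ℕ) → Prop)
    (hPr : ∀ a b, Pr b → Pr (a + b)) : Ideal (MvPolynomial σ k) where
  carrier := {p | ∀ d ∈ p.support, Pr d}
  zero_mem' := by simp
  add_mem' := by
    classical
    intro p q hp hq d hd
    rcases Finset.mem_union.1 (MvPolynomial.support_add hd) with h | h
    exacts [hp d h, hq d h]
  smul_mem' := by
    classical
    intro r p hp d hd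
    rw [smul_eq_mul] at hd
    obtain ⟨a, -, b, hb, rfl⟩ := Finset.mem_add.1 (MvPolynomial.support_mul r p hd)
    exact hPr a b (hp b hb)

lemma mem_suppIdeal_iff {k : Type*} [CommRing k] {σ : Type*} {Pr : (σ →₀ ℕ) → Prop}
    {hPr : ∀ a b, Pr b → Pr (a + b)} {p : MvPolynomial σ k} :
    p ∈ suppIdeal k σ Pr hPr ↔ ∀ d ∈ p.support, Pr d := Iff.rfl

def rowDeg {s : ℕ} (i : Fin s) (d : Fin s × Fin (s-1) →₀ ℕ) : ℕ :=
  ∑ j : Fin (s-1), d (i, j)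

lemma rowDeg_add {s : ℕ} (i : Fin s) (a b : Fin s × Fin (s-1) →₀ ℕ) :
    rowDeg i (a + b) = rowDeg i a + rowDeg i b := by
  simp [rowDeg, Finset.sum_add_distrib]

def rowIdeal (k : Type*) [CommRing k] {s : ℕ} (i : Fin s) (u : ℕ) :
    Ideal (MvPolynomial (Fin s × Fin (s-1)) k) :=
  suppIdeal k _ (fun d => u ≤ rowDeg i d)
    (fun a b hb => le_trans hb (by rw [rowDeg_add]; omega))

lemma rowIdeal_mul_le {k : Type*} [CommRing k] {s : ℕ} (i : Fin s) (u v : ℕ) :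
    rowIdeal k i u * rowIdeal k i v ≤ rowIdeal k i (u + v) := by
  classical
  rw [Ideal.mul_le]
  intro p hp q hq d hd
  obtain ⟨a, ha, b, hb, rfl⟩ := Finset.mem_add.1 (MvPolynomial.support_mul p q hd)
  rw [rowDeg_add]
  exact Nat.add_le_add (hp a ha) (hq b hb)

lemma pow_le_rowIdeal {k : Type*} [Field k] {s : ℕ} (i : Fin s)
    (Pi : Ideal (MvPolynomial (Fin s × Fin (s-1)) k))
    (hPi : Pi = Ideal.span (Set.range fun j : Fin (s-1) =>
      (X (i, j) : MvPolynomial (Fin s × Fin (s-1)) k)))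
    (u : ℕ) (hu : 1 ≤ u) : Pi ^ u ≤ rowIdeal k i u := by
  have base : Pi ≤ rowIdeal k i 1 := by
    rw [hPi, Ideal.span_le]
    rintro _ ⟨j, rfl⟩
    intro d hd
    rw [MvPolynomial.support_X, Finset.mem_singleton] at hd
    subst hd
    simp only [rowDeg, Finsupp.single_apply]
    rw [Finset.sum_eq_single j] <;> simp +contextual [Prod.ext_iff, eq_comm]
  induction u with
  | zero => omega
  | succ u ih =>
    rcases Nat.eq_or_lt_of_le hu with h | h
    · simpa [← h] using base
    · calc Pi ^ (u + 1) = Pi ^ u * Pi := pow_succ Pi u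
        _ ≤ rowIdeal k i u * rowIdeal k i 1 := mul_le_mul' (ih (by omega)) base
        _ ≤ rowIdeal k i (u + 1) := rowIdeal_mul_le i u 1

lemma aux_combA (s t : ℕ) (hs : 3 ≤ s) (ht : 1 ≤ t)
    (hE : ¬ ∃ i : ℕ, 1 ≤ i ∧ i*(s-1)+1 ≤ t ∧ t ≤ i*s)
    (c : Fin s → ℕ) (hsum : ∑ i, c i = t) : ∃ i, t ≤ c i * (s-1) := by
  by_contra h
  push_neg at h
  set m := (t-1)/(s-1) with hm
  have hs1 : 0 < s - 1 := by omega
  have hcm : ∀ i, c i ≤ m := fun i =>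
    (Nat.le_div_iff_mul_le hs1).2 (by have := h i; omega)
  have hts : t ≤ s * m := by
    calc t = ∑ i, c i := hsum.symm
    _ ≤ ∑ _i : Fin s, m := Finset.sum_le_sum fun i _ => hcm i
    _ = s * m := by simp [Finset.sum_const, mul_comm]
  have hm1 : 1 ≤ m := by
    rcases Nat.eq_zero_or_pos m with h0 | h0
    · rw [h0] at hts; omega
    · exact h0
  have hx : m * (s-1) ≤ t - 1 := Nat.div_mul_le_self _ _
  exact hE ⟨m, hm1, Nat.lt_of_le_of_lt hx (by omega), by rw [mul_comm]; exact hts⟩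

lemma aux_combB (s t n : ℕ) (hs : 3 ≤ s) (ht : 1 ≤ t) (hn1 : 1 ≤ n)
    (hn2 : n*(s-1)+1 ≤ t) (hn3 : t ≤ n*s) :
    ∃ c : Fin s → ℕ, (∑ i, c i) = t ∧ ∀ i, c i * (s-1) < t := by
  set q := t / s with hq
  set r := t % s with hr
  set m := (t-1)/(s-1) with hm
  have hs1 : 0 < s - 1 := by omega
  have hdm : s * q + r = t := Nat.div_add_mod t s
  have hrs : r < s := Nat.mod_lt _ (by omega)
  have hnm : n ≤ m := (Nat.le_div_iff_mul_le hs1).2 (by omega)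
  have htm : t ≤ m * s := le_trans hn3 (Nat.mul_le_mul_right s hnm)
  have hm1 : m * (s-1) ≤ t - 1 := Nat.div_mul_le_self _ _
  have hqt : q * s ≤ t := Nat.div_mul_le_self t s
  refine ⟨fun i => q + if (i : ℕ) < r then 1 else 0, ?_, ?_⟩
  · rw [Finset.sum_add_distrib, Finset.sum_const, Finset.card_univ, Fintype.card_fin,
      smul_eq_mul]
    have : ∑ i : Fin s, (if (i : ℕ) < r then 1 else 0) = r := by
      rw [Fin.sum_univ_eq_sum_range (fun i => if i < r then 1 else 0) s]
      rw [← Finset.sum_subset (Finset.range_subset_range.2 (le_of_lt hrs))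
        (fun x _ hx => if_neg (by simp at hx; omega))]
      rw [Finset.sum_congr rfl (fun x hx => if_pos (Finset.mem_range.1 hx)), Finset.sum_const,
        Finset.card_range, smul_eq_mul, Nat.mul_one]
    rw [this, mul_comm] at *
    omega
  · intro i
    show (q + if (i : ℕ) < r then 1 else 0) * (s-1) < t
    have hcim : (q + if (i : ℕ) < r then 1 else 0) ≤ m := by
      split
      · by_contra hcon
        have hq2 : m ≤ q := by omega
        have h1 : m * s ≤ q * s := Nat.mul_le_mul_right s hq2
        have h2 : q * s = t := le_antisymm hqt (by omega)
        have : r = 0 := by rw [mul_comm] at h2; omega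
        omega
      · exact Nat.le_of_mul_le_mul_right (le_trans hqt htm) (by omega)
    have := Nat.mul_le_mul_right (s-1) hcim
    omega

/-- **Claim 1 in the proof of Theorem 2.6.**  In the polynomial ring
`R = k[x_{i,j} : 1 ≤ i ≤ s, 1 ≤ j ≤ s-1]`, let `P_i = (x_{i,1},…,x_{i,s-1})`
and `Q = (f_1,…,f_s)` with `f_i = x_{i,1} ⋯ x_{i,s-1}`.  Then
`Q^t ⊆ P_1^t + ⋯ + P_s^t` if and only if `t ∉ E(s)`, where
`E(s) = ⋃_{i ≥ 1} {t : i(s-1)+1 ≤ t ≤ is}`. -/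
theorem stmt14 {k : Type*} [Field k] (s : ℕ) (hs : 3 ≤ s) (t : ℕ) (ht : 1 ≤ t)
    (Q : Ideal (MvPolynomial (Fin s × Fin (s-1)) k))
    (P : Fin s → Ideal (MvPolynomial (Fin s × Fin (s-1)) k))
    (hQ : Q = Ideal.span (Set.range fun i : Fin s =>
      ∏ j : Fin (s-1), (X (i, j) : MvPolynomial (Fin s × Fin (s-1)) k)))
    (hP : ∀ i : Fin s, P i = Ideal.span (Set.range fun j : Fin (s-1) =>
      (X (i, j) : MvPolynomial (Fin s × Fin (s-1)) k))) :
    Q ^ t ≤ ⨆ i : Fin s, (P i) ^ t ↔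
      ¬ ∃ i : ℕ, 1 ≤ i ∧ i*(s-1)+1 ≤ t ∧ t ≤ i*s := by
  classical
  set f : Fin s → MvPolynomial (Fin s × Fin (s-1)) k :=
    fun i => ∏ j : Fin (s-1), X (i, j) with hf
  have hfP : ∀ i, f i ∈ (P i) ^ (s - 1) := by
    intro i
    have : f i ∈ (P i) ^ (Finset.univ : Finset (Fin (s-1))).card :=
      aux_prod_mem_pow (P i) (fun j => X (i, j)) Finset.univ
        (fun j _ => by rw [hP i]; exact Ideal.subset_span ⟨j, rfl⟩)
    simpa using this
  constructor
  · -- containment → ¬ ∃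
    intro hle
    rintro ⟨n, hn1, hn2, hn3⟩
    obtain ⟨c, hsum, hlt⟩ := aux_combB s t n hs ht hn1 hn2 hn3
    set e : Fin s × Fin (s-1) →₀ ℕ :=
      ∑ i : Fin s, ∑ j : Fin (s-1), Finsupp.single (i, j) (c i) with he
    have hg : (∏ i : Fin s, f i ^ c i) = monomial e (1 : k) := by
      have : ∀ i : Fin s, f i ^ c i
          = monomial (∑ j : Fin (s-1), Finsupp.single ((i, j) : Fin s × Fin (s-1)) (c i)) (1:k) := by
        intro i
        rw [hf]
        simp only [← Finset.prod_pow, X_pow_eq_monomial]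
        exact aux_prod_monomial _ _
      rw [Finset.prod_congr rfl (fun i _ => this i)]
      exact aux_prod_monomial _ _
    have hgQ : (∏ i : Fin s, f i ^ c i) ∈ Q ^ t := by
      rw [← hsum, hQ]
      exact aux_prod_pow_mem _ f c Finset.univ (fun i _ => Ideal.subset_span ⟨i, rfl⟩)
    have hre : ∀ i' : Fin s, rowDeg i' e = (s-1) * c i' := by
      intro i'
      have heval : ∀ j' : Fin (s-1), e (i', j') = c i' := by
        intro j'
        rw [he]
        simp only [Finsupp.finset_sum_apply, Finsupp.single_apply, Prod.ext_iff]
        have h1 : ∀ x : Fin s, (∑ x1 : Fin (s-1), if x = i' ∧ x1 = j' then c x else 0)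
            = if x = i' then c x else 0 := by
          intro x
          split
          · next h => simp [h]
          · next h => simp [h]
        rw [Finset.sum_congr rfl (fun x _ => h1 x)]
        simp
      unfold rowDeg
      rw [Finset.sum_congr rfl (fun j' _ => heval j'), Finset.sum_const, Finset.card_univ,
        Fintype.card_fin, smul_eq_mul]
    have hsup : ⨆ i : Fin s, (P i) ^ t ≤
        suppIdeal k _ (fun d => ∃ i, t ≤ rowDeg i d)
          (fun a b ⟨i, hi⟩ => ⟨i, le_trans hi (by rw [rowDeg_add]; exact Nat.le_add_left _ _)⟩) :=
      iSup_le fun i => le_trans (pow_le_rowIdeal i (P i) (hP i) t ht)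
        (fun p hp d hd => ⟨i, hp d hd⟩)
    have hK := hsup (hle hgQ)
    rw [hg, mem_suppIdeal_iff] at hK
    obtain ⟨i, hi⟩ := hK e (by
      rw [MvPolynomial.support_monomial, if_neg (one_ne_zero : (1:k) ≠ 0)]
      exact Finset.mem_singleton_self e)
    rw [hre i, mul_comm] at hi
    exact absurd hi (not_le.2 (hlt i))
  · -- ¬ ∃ → containment
    intro hE
    rw [hQ]
    have hps : (Ideal.span (Set.range f)) ^ t = Ideal.span (Set.range f ^ t) :=
      Submodule.span_pow _ t
    rw [hps, Ideal.span_le]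
    intro x hx
    obtain ⟨b, hb⟩ := Set.mem_pow.1 hx
    rw [List.prod_ofFn] at hb
    choose a ha using fun l : Fin t => (b l).2
    have hxp : x = ∏ l : Fin t, f (a l) := by
      rw [← hb]
      exact Finset.prod_congr rfl fun l _ => (ha l).symm
    set c : Fin s → ℕ := fun i => (Finset.univ.filter fun l => a l = i).card with hc
    have hsum : ∑ i, c i = t := by
      rw [hc]
      have := Finset.card_eq_sum_card_fiberwise
        (f := a) (s := Finset.univ) (t := Finset.univ) (fun x _ => Finset.mem_univ _)
      simpa using this.symm
    obtain ⟨i, hi⟩ := aux_combA s t hs ht hE c hsum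
    have hxP : x ∈ (P i) ^ t := by
      have hsplit : x = f i ^ c i * ∏ l ∈ Finset.univ.filter (fun l => ¬ a l = i), f (a l) := by
        rw [hxp, ← Finset.prod_filter_mul_prod_filter_not Finset.univ (fun l => a l = i)]
        congr 1
        rw [Finset.prod_congr rfl (fun l hl => by rw [(Finset.mem_filter.1 hl).2]),
          Finset.prod_const, hc]
      have h1 : f i ^ c i ∈ (P i) ^ ((s-1) * c i) := by
        rw [pow_mul]
        exact Ideal.pow_mem_pow (hfP i) (c i)
      have h2 : f i ^ c i ∈ (P i) ^ t :=
        Ideal.pow_le_pow_right (by rw [mul_comm] at hi; exact hi) h1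
      rw [hsplit]
      exact Ideal.mul_mem_right _ _ h2
    exact le_iSup (fun i => (P i) ^ t) i hxP
end

section
/- Let $d \ge 2$, let $t \ge n(d-1)$, and let $a \in \mathbb{N}^n$ with $a_1 + \cdots + a_n = dt$. Then there exist $b, c \in \mathbb{N}^n$ with $a = (d-1)b + c$ and $|b| = |c| = t$, where $|v|$ denotes the sum of coordinates of $v$. -/
lemma exists_le_sum_aux : ∀ (n : ℕ) (f : Fin n → ℕ) (m : ℕ), m ≤ ∑ i, f i →
    ∃ g : Fin n → ℕ, (∀ i, g i ≤ f i) ∧ ∑ i, g i = m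
  | 0, f, m, h => by
    refine ⟨f, fun i => le_refl _, ?_⟩
    simp at h ⊢
    omega
  | n+1, f, m, h => by
    rw [Fin.sum_univ_succ] at h
    obtain ⟨g, hg, hsum⟩ := exists_le_sum_aux n (fun i => f i.succ) (m - min m (f 0))
      (by beta_reduce; omega)
    refine ⟨Fin.cons (min m (f 0)) g, ?_, ?_⟩
    · intro i
      refine Fin.cases ?_ ?_ i
      · simp only [Fin.cons_zero]; exact min_le_right _ _
      · intro j; simpa using hg j
    · rw [Fin.sum_univ_succ]
      simp only [Fin.cons_zero, Fin.cons_succ]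
      omega

/-- **Combinatorial decomposition in the proof of Lemma 3.6.**  Let `d ≥ 2`,
`t ≥ n(d-1)` and `a ∈ ℕ^n` with `a_1 + ⋯ + a_n = dt`.  Then there are
`b, c ∈ ℕ^n` with `a = (d-1)b + c` componentwise and `|b| = |c| = t`. -/
theorem stmt16 (n d t : ℕ) (hd : 2 ≤ d) (ht : n*(d-1) ≤ t)
    (a : Fin n → ℕ) (ha : ∑ i, a i = d*t) :
    ∃ b c : Fin n → ℕ, (∀ i, a i = (d-1)*(b i) + c i) ∧
      ∑ i, b i = t ∧ ∑ i, c i = t := by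
  set e := d - 1 with he
  have he1 : 1 ≤ e := by omega
  set q : Fin n → ℕ := fun i => a i / e with hq
  set r : Fin n → ℕ := fun i => a i % e with hr
  have hdm : ∀ i, a i = e * q i + r i := by
    intro i
    have := Nat.div_add_mod (a i) e
    show a i = e * (a i / e) + a i % e
    omega
  have hsum : e * (∑ i, q i) + (∑ i, r i) = e * t + t := by
    have h1 : ∑ i, (e * q i + r i) = d * t := by
      rw [← ha]; exact Finset.sum_congr rfl (fun i _ => (hdm i).symm)
    rw [Finset.sum_add_distrib, ← Finset.mul_sum] at h1
    have h2 : e * t + t = d * t := by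
      have : e + 1 = d := by omega
      calc e * t + t = (e + 1) * t := by ring
        _ = d * t := by rw [this]
    omega
  have hRle : (∑ i, r i) ≤ t := by
    have h1 : ∑ i, r i ≤ ∑ _i : Fin n, e := Finset.sum_le_sum (fun i _ => by
      have := Nat.mod_lt (a i) (show 0 < e by omega)
      show a i % e ≤ e
      omega)
    simp only [Finset.sum_const, Finset.card_univ, Fintype.card_fin, smul_eq_mul] at h1
    omega
  have hQt : t ≤ ∑ i, q i := by
    have h1 : e * t ≤ e * (∑ i, q i) := by omega
    exact Nat.le_of_mul_le_mul_left h1 (by omega)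
  set m := (∑ i, q i) - t with hm
  have hem : e * m = t - (∑ i, r i) := by
    rw [hm]
    have h1 := Nat.mul_sub e (∑ i, q i) t
    omega
  obtain ⟨g, hg, hgsum⟩ := exists_le_sum_aux n q m (by omega)
  refine ⟨fun i => q i - g i, fun i => r i + e * g i, ?_, ?_, ?_⟩
  · intro i
    show a i = e * (q i - g i) + (r i + e * g i)
    have h1 : e * (q i - g i) = e * q i - e * g i := Nat.mul_sub e _ _
    have h2 : e * g i ≤ e * q i := Nat.mul_le_mul_left e (hg i)
    have := hdm i
    omega
  · beta_reduce
    have h1 : (∑ i, (q i - g i)) + (∑ i, g i) = ∑ i, q i := by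
      rw [← Finset.sum_add_distrib]
      exact Finset.sum_congr rfl (fun i _ => by have := hg i; omega)
    omega
  · beta_reduce
    rw [Finset.sum_add_distrib, ← Finset.mul_sum, hgsum]
    omega
end

section
/- Consider the monomial ideals $M = (x^7, y^7, x^2y^2z, z^5)^2$, $P = (x^7, y^7)$, and $Q = (z^2)$ in $k[x,y,z]$. Then $M^t \subseteq P^t + Q^t$ for all positive integers $t \ne 2$, while $M^2 \not\subseteq P^2 + Q^2$ (witnessed by $x^{13}y^6z^3 \in M^2 \setminus (P^2 + Q^2)$). -/
open MvPolynomial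


lemma pow_span_le {R : Type*} [CommSemiring R] (g1 g2 g3 g4 : R) (n : ℕ) :
    Ideal.span {g1, g2, g3, g4} ^ n ≤
      Ideal.span {m | ∃ a b c d : ℕ, a + b + c + d = n ∧ m = g1 ^ a * g2 ^ b * g3 ^ c * g4 ^ d} := by
  induction n with
  | zero =>
    rw [pow_zero, Ideal.one_eq_top]
    rw [top_le_iff, Ideal.eq_top_iff_one]
    exact Ideal.subset_span ⟨0, 0, 0, 0, by simp, by simp⟩
  | succ n ih =>
    rw [pow_succ]
    calc Ideal.span {g1, g2, g3, g4} ^ n * Ideal.span {g1, g2, g3, g4}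
        ≤ Ideal.span {m | ∃ a b c d : ℕ, a + b + c + d = n ∧ m = g1 ^ a * g2 ^ b * g3 ^ c * g4 ^ d}
            * Ideal.span {g1, g2, g3, g4} := Ideal.mul_mono_left ih
      _ ≤ _ := by
          rw [Ideal.span_mul_span']
          apply Ideal.span_le.2
          rintro x ⟨m, ⟨a, b, c, d, hsum, rfl⟩, g, hg, rfl⟩
          apply Ideal.subset_span
          rcases hg with rfl | rfl | rfl | rfl
          · exact ⟨a + 1, b, c, d, by omega, by ring⟩
          · exact ⟨a, b + 1, c, d, by omega, by ring⟩
          · exact ⟨a, b, c + 1, d, by omega, by ring⟩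
          · exact ⟨a, b, c, d + 1, by omega, by ring⟩

lemma gen_mem {R : Type*} [CommRing R] (x y z : R) (t a b c d : ℕ)
    (h : a + b + c + d = 2 * t) (ht : 1 ≤ t) (ht2 : t ≠ 2) :
    (x ^ 7) ^ a * (y ^ 7) ^ b * (x ^ 2 * y ^ 2 * z) ^ c * (z ^ 5) ^ d ∈
      Ideal.span {x ^ 7, y ^ 7} ^ t + Ideal.span {z ^ 2} ^ t := by
  rw [Ideal.add_eq_sup]
  by_cases hq : 2 * t ≤ c + 5 * d
  · apply Submodule.mem_sup_right
    rw [Ideal.span_singleton_pow, Ideal.mem_span_singleton]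
    obtain ⟨e, he⟩ : ∃ e, c + 5 * d = e + 2 * t := ⟨c + 5 * d - 2 * t, by omega⟩
    have key : (x ^ 7) ^ a * (y ^ 7) ^ b * (x ^ 2 * y ^ 2 * z) ^ c * (z ^ 5) ^ d
        = (x ^ (7 * a + 2 * c) * y ^ (7 * b + 2 * c) * z ^ e) * (z ^ 2) ^ t := by
      calc (x ^ 7) ^ a * (y ^ 7) ^ b * (x ^ 2 * y ^ 2 * z) ^ c * (z ^ 5) ^ d
          = x ^ (7 * a + 2 * c) * y ^ (7 * b + 2 * c) * z ^ (c + 5 * d) := by ring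
        _ = _ := by rw [he]; ring
    exact key ▸ dvd_mul_left _ _
  · apply Submodule.mem_sup_left
    have hkey : t ≤ a + b + 2 * (2 * c / 7) := by omega
    obtain ⟨i, hit, hix, hiy⟩ : ∃ i, i ≤ t ∧ 7 * i ≤ 7 * a + 2 * c ∧
        7 * (t - i) ≤ 7 * b + 2 * c := ⟨min t (a + 2 * c / 7), by omega, by omega, by omega⟩
    have hx : (x ^ 7) ^ i * (y ^ 7) ^ (t - i) ∈ Ideal.span {x ^ 7, y ^ 7} ^ t := by
      have := Ideal.mul_mem_mul
        (Ideal.pow_mem_pow (Ideal.subset_span (by simp) : x ^ 7 ∈ Ideal.span {x ^ 7, y ^ 7}) i)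
        (Ideal.pow_mem_pow (Ideal.subset_span (by simp) : y ^ 7 ∈ Ideal.span {x ^ 7, y ^ 7}) (t - i))
      rwa [← pow_add, Nat.add_sub_cancel' hit] at this
    obtain ⟨p, hp⟩ : ∃ p, 7 * a + 2 * c = p + 7 * i := ⟨7 * a + 2 * c - 7 * i, by omega⟩
    obtain ⟨q, hq'⟩ : ∃ q, 7 * b + 2 * c = q + 7 * (t - i) := ⟨7 * b + 2 * c - 7 * (t - i), by omega⟩
    have key : (x ^ 7) ^ a * (y ^ 7) ^ b * (x ^ 2 * y ^ 2 * z) ^ c * (z ^ 5) ^ d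
        = (x ^ p * y ^ q * z ^ (c + 5 * d)) * ((x ^ 7) ^ i * (y ^ 7) ^ (t - i)) := by
      calc (x ^ 7) ^ a * (y ^ 7) ^ b * (x ^ 2 * y ^ 2 * z) ^ c * (z ^ 5) ^ d
          = x ^ (7 * a + 2 * c) * y ^ (7 * b + 2 * c) * z ^ (c + 5 * d) := by ring
        _ = _ := by rw [hp, hq']; ring
    exact key ▸ Ideal.mul_mem_left _ _ hx

lemma coeff_vanish {k : Type*} [Field k]
    (p : MvPolynomial (Fin 3) k)
    (hp : p ∈ Ideal.span {(X 0 : MvPolynomial (Fin 3) k) ^ 14, X 0 ^ 7 * X 1 ^ 7, X 1 ^ 14,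
      X 2 ^ 4}) :
    coeff (Finsupp.single 0 13 + Finsupp.single 1 6 + Finsupp.single 2 3) p = 0 := by
  set μ : Fin 3 →₀ ℕ := Finsupp.single 0 13 + Finsupp.single 1 6 + Finsupp.single 2 3 with hμ
  have hμ0 : μ 0 = 13 := by simp [hμ, Finsupp.single_apply]
  have hμ1 : μ 1 = 6 := by simp [hμ, Finsupp.single_apply]
  have hμ2 : μ 2 = 3 := by simp [hμ, Finsupp.single_apply]
  rw [show (Ideal.span : Set (MvPolynomial (Fin 3) k) → _) = Submodule.span _ from rfl, Submodule.mem_span_insert'] at hp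
  obtain ⟨r1, hp⟩ := hp
  rw [Submodule.mem_span_insert'] at hp
  obtain ⟨r2, hp⟩ := hp
  rw [Submodule.mem_span_insert'] at hp
  obtain ⟨r3, hp⟩ := hp
  rw [Submodule.mem_span_singleton] at hp
  obtain ⟨r4, hp⟩ := hp
  simp only [smul_eq_mul] at hp
  have e1 : (X 0 : MvPolynomial (Fin 3) k) ^ 14 = monomial (Finsupp.single 0 14) 1 :=
    X_pow_eq_monomial
  have e2 : (X 0 : MvPolynomial (Fin 3) k) ^ 7 * X 1 ^ 7
      = monomial (Finsupp.single 0 7 + Finsupp.single 1 7) 1 := by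
    rw [X_pow_eq_monomial, X_pow_eq_monomial, monomial_mul, one_mul]
  have e3 : (X 1 : MvPolynomial (Fin 3) k) ^ 14 = monomial (Finsupp.single 1 14) 1 :=
    X_pow_eq_monomial
  have e4 : (X 2 : MvPolynomial (Fin 3) k) ^ 4 = monomial (Finsupp.single 2 4) 1 :=
    X_pow_eq_monomial
  have hv1 : ¬ Finsupp.single (0 : Fin 3) 14 ≤ μ := by
    intro h; have := (Finsupp.le_def.1 h) 0; rw [hμ0] at this
    simp [Finsupp.single_apply] at this
  have hv2 : ¬ Finsupp.single (0 : Fin 3) 7 + Finsupp.single 1 7 ≤ μ := by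
    intro h; have := (Finsupp.le_def.1 h) 1; rw [hμ1] at this
    simp [Finsupp.single_apply] at this
  have hv3 : ¬ Finsupp.single (1 : Fin 3) 14 ≤ μ := by
    intro h; have := (Finsupp.le_def.1 h) 1; rw [hμ1] at this
    simp [Finsupp.single_apply] at this
  have hv4 : ¬ Finsupp.single (2 : Fin 3) 4 ≤ μ := by
    intro h; have := (Finsupp.le_def.1 h) 2; rw [hμ2] at this
    simp [Finsupp.single_apply] at this
  have hsub : p = r4 * X 2 ^ 4 + (-r3) * X 1 ^ 14 + (-r2) * (X 0 ^ 7 * X 1 ^ 7)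
      + (-r1) * X 0 ^ 14 := by linear_combination -hp
  rw [hsub, coeff_add, coeff_add, coeff_add, e1, e2, e3, e4,
    coeff_mul_monomial', coeff_mul_monomial', coeff_mul_monomial', coeff_mul_monomial',
    if_neg hv1, if_neg hv2, if_neg hv3, if_neg hv4]
  ring

/-- **Example 6.4.**  In `k[x,y,z]` with `M = (x^7, y^7, x²y²z, z^5)^2`,
`P = (x^7, y^7)` and `Q = (z^2)`, one has `M^t ⊆ P^t + Q^t` for all positive
`t ≠ 2`, while `M^2 ⊄ P^2 + Q^2`, witnessed by
`x^{13} y^6 z^3 ∈ M^2 \ (P^2 + Q^2)`. -/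
theorem stmt19 {k : Type*} [Field k] (M P Q : Ideal (MvPolynomial (Fin 3) k))
    (hM : M = (Ideal.span {(X 0 : MvPolynomial (Fin 3) k) ^ 7, X 1 ^ 7,
      X 0 ^ 2 * X 1 ^ 2 * X 2, X 2 ^ 5}) ^ 2)
    (hP : P = Ideal.span {(X 0 : MvPolynomial (Fin 3) k) ^ 7, X 1 ^ 7})
    (hQ : Q = Ideal.span {(X 2 : MvPolynomial (Fin 3) k) ^ 2}) :
    (∀ t : ℕ, 1 ≤ t → t ≠ 2 → M ^ t ≤ P ^ t + Q ^ t) ∧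
    ¬ M ^ 2 ≤ P ^ 2 + Q ^ 2 ∧
    (X 0 : MvPolynomial (Fin 3) k) ^ 13 * X 1 ^ 6 * X 2 ^ 3 ∈ M ^ 2 ∧
    (X 0 : MvPolynomial (Fin 3) k) ^ 13 * X 1 ^ 6 * X 2 ^ 3 ∉ P ^ 2 + Q ^ 2 := by
  subst hM hP hQ
  set I : Ideal (MvPolynomial (Fin 3) k) := Ideal.span {(X 0 : MvPolynomial (Fin 3) k) ^ 7,
    X 1 ^ 7, X 0 ^ 2 * X 1 ^ 2 * X 2, X 2 ^ 5} with hI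
  -- part 1
  have main : ∀ t : ℕ, 1 ≤ t → t ≠ 2 → (I ^ 2) ^ t ≤
      Ideal.span {(X 0 : MvPolynomial (Fin 3) k) ^ 7, X 1 ^ 7} ^ t
        + Ideal.span {(X 2 : MvPolynomial (Fin 3) k) ^ 2} ^ t := by
    intro t ht ht2
    rw [← pow_mul]
    refine le_trans (pow_span_le _ _ _ _ (2 * t)) (Ideal.span_le.2 ?_)
    rintro m ⟨a, b, c, d, hsum, rfl⟩
    exact gen_mem _ _ _ t a b c d hsum ht ht2
  -- witness membership
  have hw : (X 0 : MvPolynomial (Fin 3) k) ^ 13 * X 1 ^ 6 * X 2 ^ 3 ∈ (I ^ 2) ^ 2 := by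
    have h1 : (X 0 : MvPolynomial (Fin 3) k) ^ 7 ∈ I := Ideal.subset_span (by simp)
    have h3 : (X 0 : MvPolynomial (Fin 3) k) ^ 2 * X 1 ^ 2 * X 2 ∈ I :=
      Ideal.subset_span (by simp)
    have h := Ideal.mul_mem_mul h1 (Ideal.pow_mem_pow h3 3)
    rw [show I * I ^ 3 = (I ^ 2) ^ 2 from by ring] at h
    rw [show (X 0 : MvPolynomial (Fin 3) k) ^ 13 * X 1 ^ 6 * X 2 ^ 3
      = X 0 ^ 7 * (X 0 ^ 2 * X 1 ^ 2 * X 2) ^ 3 from by ring]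
    exact h
  -- witness non-membership
  have hle : Ideal.span {(X 0 : MvPolynomial (Fin 3) k) ^ 7, X 1 ^ 7} ^ 2
      + Ideal.span {(X 2 : MvPolynomial (Fin 3) k) ^ 2} ^ 2 ≤
      Ideal.span {(X 0 : MvPolynomial (Fin 3) k) ^ 14, X 0 ^ 7 * X 1 ^ 7, X 1 ^ 14, X 2 ^ 4} := by
    rw [Ideal.add_eq_sup, sup_le_iff]
    constructor
    · rw [pow_two, Ideal.span_mul_span']
      refine Ideal.span_le.2 ?_
      rintro m ⟨u, hu, v, hv, rfl⟩
      simp only [Set.mem_insert_iff, Set.mem_singleton_iff] at hu hv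
      apply Ideal.subset_span
      simp only [Set.mem_insert_iff, Set.mem_singleton_iff]
      rcases hu with rfl | rfl <;> rcases hv with rfl | rfl
      · exact Or.inl (by ring)
      · exact Or.inr (Or.inl rfl)
      · exact Or.inr (Or.inl (by ring))
      · exact Or.inr (Or.inr (Or.inl (by ring)))
    · rw [Ideal.span_singleton_pow]
      refine Ideal.span_le.2 ?_
      intro m hm
      rw [Set.mem_singleton_iff] at hm
      subst hm
      refine Ideal.subset_span ?_
      simp only [Set.mem_insert_iff, Set.mem_singleton_iff]
      exact Or.inr (Or.inr (Or.inr (by ring)))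
  have hwnot : (X 0 : MvPolynomial (Fin 3) k) ^ 13 * X 1 ^ 6 * X 2 ^ 3 ∉
      Ideal.span {(X 0 : MvPolynomial (Fin 3) k) ^ 7, X 1 ^ 7} ^ 2
        + Ideal.span {(X 2 : MvPolynomial (Fin 3) k) ^ 2} ^ 2 := by
    intro hmem
    have h0 := coeff_vanish _ (hle hmem)
    have h1 : coeff (Finsupp.single 0 13 + Finsupp.single 1 6 + Finsupp.single 2 3)
        ((X 0 : MvPolynomial (Fin 3) k) ^ 13 * X 1 ^ 6 * X 2 ^ 3) = 1 := by
      rw [X_pow_eq_monomial, X_pow_eq_monomial, X_pow_eq_monomial, monomial_mul, monomial_mul,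
        one_mul, one_mul, coeff_monomial, if_pos rfl]
    rw [h0] at h1
    exact one_ne_zero h1.symm
  exact ⟨main, fun h => hwnot (h hw), hw, hwnot⟩
end
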